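/- arXiv:1610.09289 — 2 statements merged into one kernel-verified Lean document; each statement's English description precedes it below -/
import Mathlib

section
/- Let (U, X, Y, V) have a joint distribution P_{UXYV} on finite alphabets such that U → X → Y and X → Y → V are Markov chains (i.e., P_{UXYV} = P_{U|X}·P_{XY}·P_{V|Y}). Then ρ_m((U,X); (V,Y)) = max{ ρ_m(X;Y), ρ_m(U;V | (X,Y)) }. -/
open scoped BigOperators Classical

noncomputable section

namespace GCI

/-- A bundled finite alphabet. -/
structure FinAlph : Type 1 where
  carrier : Type
  [fin : Fintype carrier]

instance : CoeSort FinAlph Type := ⟨FinAlph.carrier⟩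
instance (A : FinAlph) : Fintype A := A.fin

variable {Ω : Type} [Fintype Ω]

/-- `p` is a probability mass function on the finite sample space `Ω`. -/
def IsPMF (p : Ω → ℝ) : Prop := (∀ ω, 0 ≤ p ω) ∧ ∑ ω, p ω = 1

/-- Expectation of a real random variable `f` under the pmf `p`. -/
def expec (p : Ω → ℝ) (f : Ω → ℝ) : ℝ := ∑ ω, p ω * f ω

/-- Marginal pmf of the random variable `X` under `p`. -/
def marg {𝒳 : Type} (p : Ω → ℝ) (X : Ω → 𝒳) (x : 𝒳) : ℝ :=
  ∑ ω, if X ω = x then p ω else 0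

/-- Conditional expectation `E[f | U = u]`. -/
def cexp {𝒰 : Type} (p : Ω → ℝ) (U : Ω → 𝒰) (u : 𝒰) (f : Ω → ℝ) : ℝ :=
  (∑ ω, if U ω = u then p ω * f ω else 0) / marg p U u

/-- `E[cov(f, g | U)]`. -/
def ccov {𝒰 : Type} (p : Ω → ℝ) (U : Ω → 𝒰) (f g : Ω → ℝ) : ℝ :=
  expec p fun ω => (f ω - cexp p U (U ω) f) * (g ω - cexp p U (U ω) g)

/-- `E[var(f | U)]`. -/
def cvar {𝒰 : Type} (p : Ω → ℝ) (U : Ω → 𝒰) (f : Ω → ℝ) : ℝ := ccov p U f f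

/-- Conditional Pearson correlation `ρ(f; g | U)`. -/
def ccorr {𝒰 : Type} (p : Ω → ℝ) (U : Ω → 𝒰) (f g : Ω → ℝ) : ℝ :=
  if 0 < cvar p U f * cvar p U g then
    ccov p U f g / (Real.sqrt (cvar p U f) * Real.sqrt (cvar p U g))
  else 0

/-- Conditional correlation ratio `θ(X; Y | U)` for a real-valued `X`. -/
def cratio {𝒴 𝒰 : Type} (p : Ω → ℝ) (U : Ω → 𝒰) (X : Ω → ℝ) (Y : Ω → 𝒴) : ℝ :=
  ⨆ g : 𝒴 × 𝒰 → ℝ, ccorr p U X fun ω => g (Y ω, U ω)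

/-- Conditional maximal correlation `ρ_m(X; Y | U)`. -/
def maxCorr {𝒳 𝒴 𝒰 : Type} (p : Ω → ℝ) (U : Ω → 𝒰) (X : Ω → 𝒳) (Y : Ω → 𝒴) : ℝ :=
  ⨆ f : 𝒳 × 𝒰 → ℝ, ⨆ g : 𝒴 × 𝒰 → ℝ,
    ccorr p U (fun ω => f (X ω, U ω)) fun ω => g (Y ω, U ω)

/-- Unconditional Pearson correlation. -/
def corr0 (p : Ω → ℝ) (f g : Ω → ℝ) : ℝ := ccorr p (fun _ => ()) f g

/-- Unconditional correlation ratio `θ(X;Y)`. -/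
def ratio0 {𝒴 : Type} (p : Ω → ℝ) (X : Ω → ℝ) (Y : Ω → 𝒴) : ℝ :=
  cratio p (fun _ => ()) X Y

/-- Unconditional maximal correlation `ρ_m(X;Y)`. -/
def maxCorr0 {𝒳 𝒴 : Type} (p : Ω → ℝ) (X : Ω → 𝒳) (Y : Ω → 𝒴) : ℝ :=
  maxCorr p (fun _ => ()) X Y

/-- Shannon entropy (base 2) of the random variable `X` under `p`. -/
def ent {𝒳 : Type} [Fintype 𝒳] (p : Ω → ℝ) (X : Ω → 𝒳) : ℝ :=
  ∑ x, -(marg p X x * Real.logb 2 (marg p X x))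

/-- Conditional Shannon entropy `H(X | U)`. -/
def condEnt {𝒳 𝒰 : Type} [Fintype 𝒳] [Fintype 𝒰] (p : Ω → ℝ) (X : Ω → 𝒳) (U : Ω → 𝒰) : ℝ :=
  ent p (fun ω => (X ω, U ω)) - ent p U

/-- Mutual information `I(X; U)`. -/
def mutInfo {𝒳 𝒰 : Type} [Fintype 𝒳] [Fintype 𝒰] (p : Ω → ℝ) (X : Ω → 𝒳) (U : Ω → 𝒰) : ℝ :=
  ent p X + ent p U - ent p fun ω => (X ω, U ω)

/-- Almost-sure equality of two discrete random variables. -/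
def AEEq {𝒱 : Type} (p : Ω → ℝ) (f g : Ω → 𝒱) : Prop := ∀ ω, 0 < p ω → f ω = g ω

/-- The Gács–Körner common information `C_GK(X;Y)`. -/
def CGK {𝒳 𝒴 : Type} (p : Ω → ℝ) (X : Ω → 𝒳) (Y : Ω → 𝒴) : ℝ :=
  sSup { r | ∃ (𝒱 : FinAlph) (f : 𝒳 → 𝒱) (g : 𝒴 → 𝒱),
    AEEq p (fun ω => f (X ω)) (fun ω => g (Y ω)) ∧ r = ent p fun ω => f (X ω) }

/-- The conditional Gács–Körner common information `C_GK(X;Y|U)`. -/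
def CGKcond {𝒳 𝒴 𝒰 : Type} [Fintype 𝒰] (p : Ω → ℝ) (X : Ω → 𝒳) (Y : Ω → 𝒴)
    (U : Ω → 𝒰) : ℝ :=
  sSup { r | ∃ (𝒱 : FinAlph) (f : 𝒳 × 𝒰 → 𝒱) (g : 𝒴 × 𝒰 → 𝒱),
    AEEq p (fun ω => f (X ω, U ω)) (fun ω => g (Y ω, U ω)) ∧
    r = condEnt p (fun ω => f (X ω, U ω)) U }

/-- The `β`-approximate common information (approximate information-correlation function). -/
def Cbeta {𝒳 𝒴 : Type} [Fintype 𝒳] [Fintype 𝒴] (p : 𝒳 × 𝒴 → ℝ) (β : ℝ) : ℝ :=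
  sInf { r | ∃ (𝒰 : FinAlph) (q : (𝒳 × 𝒴) × 𝒰 → ℝ),
    IsPMF q ∧ (∀ a, marg q Prod.fst a = p a) ∧
    maxCorr q Prod.snd (fun a => a.1.1) (fun a => a.1.2) ≤ β ∧
    r = mutInfo q Prod.fst Prod.snd }

/-- The `n`-th term in the definition of the `β`-exact common information:
the normalized smallest entropy of an auxiliary variable for `n` i.i.d. copies. -/
def KbetaN {𝒳 𝒴 : Type} [Fintype 𝒳] [Fintype 𝒴] (p : 𝒳 × 𝒴 → ℝ) (β : ℝ) (n : ℕ) : ℝ :=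
  sInf { r | ∃ (𝒰 : FinAlph) (q : ((Fin n → 𝒳) × (Fin n → 𝒴)) × 𝒰 → ℝ),
    IsPMF q ∧
    (∀ a : (Fin n → 𝒳) × (Fin n → 𝒴), marg q Prod.fst a = ∏ i, p (a.1 i, a.2 i)) ∧
    maxCorr q Prod.snd (fun a => a.1.1) (fun a => a.1.2) ≤ β ∧
    r = (1 / (n : ℝ)) * ent q Prod.snd }

/-- The `β`-exact common information (exact information-correlation function). -/
def Kbeta {𝒳 𝒴 : Type} [Fintype 𝒳] [Fintype 𝒴] (p : 𝒳 × 𝒴 → ℝ) (β : ℝ) : ℝ :=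
  Filter.limUnder Filter.atTop fun n => KbetaN p β n



/-! ### Auxiliary lemmas for Statement 8 -/

section Aux

/-- Weighted Cauchy–Schwarz inequality. -/
lemma weighted_cs (p a b : Ω → ℝ) (hp : ∀ ω, 0 ≤ p ω) :
    (∑ ω, p ω * (a ω * b ω))^2 ≤ (∑ ω, p ω * (a ω)^2) * (∑ ω, p ω * (b ω)^2) := by
  have h := Finset.sum_mul_sq_le_sq_mul_sq Finset.univ
    (fun ω => Real.sqrt (p ω) * a ω) (fun ω => Real.sqrt (p ω) * b ω)
  have e1 : ∀ ω : Ω, (Real.sqrt (p ω) * a ω) * (Real.sqrt (p ω) * b ω) = p ω * (a ω * b ω) := by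
    intro ω
    have h0 : Real.sqrt (p ω) * Real.sqrt (p ω) = p ω := Real.mul_self_sqrt (hp ω)
    calc (Real.sqrt (p ω) * a ω) * (Real.sqrt (p ω) * b ω)
        = (Real.sqrt (p ω) * Real.sqrt (p ω)) * (a ω * b ω) := by ring
      _ = p ω * (a ω * b ω) := by rw [h0]
  have e2 : ∀ ω : Ω, (Real.sqrt (p ω) * a ω)^2 = p ω * (a ω)^2 := by
    intro ω
    have h0 : Real.sqrt (p ω) * Real.sqrt (p ω) = p ω := Real.mul_self_sqrt (hp ω)
    calc (Real.sqrt (p ω) * a ω)^2 = (Real.sqrt (p ω) * Real.sqrt (p ω)) * (a ω)^2 := by ring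
      _ = p ω * (a ω)^2 := by rw [h0]
  have e3 : ∀ ω : Ω, (Real.sqrt (p ω) * b ω)^2 = p ω * (b ω)^2 := by
    intro ω
    have h0 : Real.sqrt (p ω) * Real.sqrt (p ω) = p ω := Real.mul_self_sqrt (hp ω)
    calc (Real.sqrt (p ω) * b ω)^2 = (Real.sqrt (p ω) * Real.sqrt (p ω)) * (b ω)^2 := by ring
      _ = p ω * (b ω)^2 := by rw [h0]
  calc (∑ ω, p ω * (a ω * b ω))^2
      = (∑ ω, (Real.sqrt (p ω) * a ω) * (Real.sqrt (p ω) * b ω))^2 := by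
        congr 1; exact Finset.sum_congr rfl fun ω _ => (e1 ω).symm
    _ ≤ (∑ ω, (Real.sqrt (p ω) * a ω)^2) * (∑ ω, (Real.sqrt (p ω) * b ω)^2) := h
    _ = (∑ ω, p ω * (a ω)^2) * (∑ ω, p ω * (b ω)^2) := by
        congr 1
        · exact Finset.sum_congr rfl fun ω _ => e2 ω
        · exact Finset.sum_congr rfl fun ω _ => e3 ω

lemma cvar_nonneg {𝒰 : Type} (p : Ω → ℝ) (U : Ω → 𝒰) (f : Ω → ℝ) (hp : ∀ ω, 0 ≤ p ω) :
    0 ≤ cvar p U f := by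
  refine Finset.sum_nonneg fun ω _ => ?_
  have h1 := hp ω
  have h2 : 0 ≤ (f ω - cexp p U (U ω) f) * (f ω - cexp p U (U ω) f) := mul_self_nonneg _
  positivity

lemma ccov_sq_le {𝒰 : Type} (p : Ω → ℝ) (U : Ω → 𝒰) (f g : Ω → ℝ) (hp : ∀ ω, 0 ≤ p ω) :
    (ccov p U f g)^2 ≤ cvar p U f * cvar p U g := by
  have := weighted_cs p (fun ω => f ω - cexp p U (U ω) f) (fun ω => g ω - cexp p U (U ω) g) hp
  simpa [ccov, cvar, expec, pow_two] using this

lemma ccorr_le_one {𝒰 : Type} (p : Ω → ℝ) (U : Ω → 𝒰) (f g : Ω → ℝ) (hp : ∀ ω, 0 ≤ p ω) :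
    ccorr p U f g ≤ 1 := by
  unfold ccorr
  split
  · rename_i h
    have hf : 0 ≤ cvar p U f := cvar_nonneg p U f hp
    have hg : 0 ≤ cvar p U g := cvar_nonneg p U g hp
    have hf' : 0 < cvar p U f := by
      rcases lt_or_eq_of_le hf with h1 | h1
      · exact h1
      · exfalso; rw [← h1] at h; simp at h
    have hg' : 0 < cvar p U g := by
      rcases lt_or_eq_of_le hg with h1 | h1
      · exact h1
      · exfalso; rw [← h1] at h; simp at h
    have hcs := ccov_sq_le p U f g hp
    have hb : ccov p U f g ≤ Real.sqrt (cvar p U f) * Real.sqrt (cvar p U g) := by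
      have h1 : ccov p U f g ≤ |ccov p U f g| := le_abs_self _
      have h2 : |ccov p U f g| = Real.sqrt ((ccov p U f g)^2) := (Real.sqrt_sq_eq_abs _).symm
      have h3 : Real.sqrt ((ccov p U f g)^2) ≤ Real.sqrt (cvar p U f * cvar p U g) :=
        Real.sqrt_le_sqrt hcs
      have h4 : Real.sqrt (cvar p U f * cvar p U g)
          = Real.sqrt (cvar p U f) * Real.sqrt (cvar p U g) := Real.sqrt_mul hf _
      linarith
    have hpos : 0 < Real.sqrt (cvar p U f) * Real.sqrt (cvar p U g) := by positivity
    rw [div_le_one hpos]; exact hb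
  · norm_num

lemma iSup2_le {ι κ : Type} (F : ι → κ → ℝ) {a : ℝ} (h : ∀ i j, F i j ≤ a) (ha : 0 ≤ a) :
    (⨆ i, ⨆ j, F i j) ≤ a :=
  Real.iSup_le (fun i => Real.iSup_le (h i) ha) ha

lemma le_iSup2 {ι κ : Type} (F : ι → κ → ℝ) (hb : ∀ i j, F i j ≤ 1) (i : ι) (j : κ) :
    F i j ≤ ⨆ i, ⨆ j, F i j := by
  have b1 : BddAbove (Set.range (F i)) := ⟨1, by rintro _ ⟨j, rfl⟩; exact hb i j⟩
  have h1 : F i j ≤ ⨆ j, F i j := le_ciSup b1 j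
  have b2 : BddAbove (Set.range fun i => ⨆ j, F i j) := by
    refine ⟨1, ?_⟩
    rintro _ ⟨i, rfl⟩
    exact Real.iSup_le (hb i) one_pos.le
  exact h1.trans (le_ciSup b2 i)

lemma marg_nonneg {𝒳 : Type} (p : Ω → ℝ) (X : Ω → 𝒳) (x : 𝒳) (hp : ∀ ω, 0 ≤ p ω) :
    0 ≤ marg p X x :=
  Finset.sum_nonneg fun ω _ => by by_cases h : X ω = x <;> simp [h, hp ω]

lemma marg_eq_zero {𝒳 : Type} (p : Ω → ℝ) (X : Ω → 𝒳) (x : 𝒳) (hp : ∀ ω, 0 ≤ p ω)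
    (h : marg p X x = 0) : ∀ ω, X ω = x → p ω = 0 := by
  intro ω hω
  have h2 := (Finset.sum_eq_zero_iff_of_nonneg (fun ω _ => by
    by_cases h3 : X ω = x <;> simp [h3, hp ω] : ∀ ω' ∈ Finset.univ,
      0 ≤ if X ω' = x then p ω' else 0)).1 h ω (Finset.mem_univ ω)
  simpa [hω] using h2

lemma marg_unit (p : Ω → ℝ) (hp : IsPMF p) : marg p (fun _ => ()) () = 1 := by
  simpa [marg] using hp.2

lemma cexp_unit (p : Ω → ℝ) (hp : IsPMF p) (f : Ω → ℝ) :
    cexp p (fun _ => ()) () f = expec p f := by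
  simp [cexp, marg_unit p hp, expec]

lemma ccov0_eq (p : Ω → ℝ) (hp : IsPMF p) (f g : Ω → ℝ) :
    ccov p (fun _ => ()) f g =
      expec p (fun ω => f ω * g ω) - expec p f * expec p g := by
  unfold ccov
  simp only [cexp_unit p hp f, cexp_unit p hp g]
  have key : ∀ ω : Ω, p ω * ((f ω - expec p f) * (g ω - expec p g)) =
      p ω * (f ω * g ω) - expec p g * (p ω * f ω) - expec p f * (p ω * g ω)
        + expec p f * expec p g * p ω := by
    intro ω; ring
  rw [show (expec p fun ω => (f ω - expec p f) * (g ω - expec p g))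
      = ∑ ω, (p ω * (f ω * g ω) - expec p g * (p ω * f ω) - expec p f * (p ω * g ω)
        + expec p f * expec p g * p ω) from Finset.sum_congr rfl fun ω _ => key ω]
  rw [Finset.sum_add_distrib, Finset.sum_sub_distrib, Finset.sum_sub_distrib,
    ← Finset.mul_sum, ← Finset.mul_sum, ← Finset.mul_sum]
  rw [hp.2]
  simp only [expec]
  ring

lemma cvar0_eq (p : Ω → ℝ) (hp : IsPMF p) (f : Ω → ℝ) :
    cvar p (fun _ => ()) f = expec p (fun ω => f ω * f ω) - expec p f * expec p f :=
  ccov0_eq p hp f f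

variable {𝒰 𝒳 𝒴 𝒱 : Type} [Fintype 𝒰] [Fintype 𝒳] [Fintype 𝒴] [Fintype 𝒱]

lemma sum4_swap_x (A : 𝒰 → 𝒳 → 𝒴 → 𝒱 → ℝ) :
    ∑ u, ∑ x, ∑ y, ∑ v, A u x y v = ∑ x, ∑ u, ∑ y, ∑ v, A u x y v :=
  Finset.sum_comm

lemma sum4_swap_xy (A : 𝒰 → 𝒳 → 𝒴 → 𝒱 → ℝ) :
    ∑ u, ∑ x, ∑ y, ∑ v, A u x y v = ∑ x, ∑ y, ∑ u, ∑ v, A u x y v := by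
  rw [sum4_swap_x]
  exact Finset.sum_congr rfl fun x _ => Finset.sum_comm

lemma sum4_swap_y (A : 𝒰 → 𝒳 → 𝒴 → 𝒱 → ℝ) :
    ∑ u, ∑ x, ∑ y, ∑ v, A u x y v = ∑ y, ∑ u, ∑ x, ∑ v, A u x y v := by
  have h1 : ∑ u, ∑ x, ∑ y, ∑ v, A u x y v = ∑ u, ∑ y, ∑ x, ∑ v, A u x y v :=
    Finset.sum_congr rfl fun u _ => Finset.sum_comm
  rw [h1]
  exact Finset.sum_comm

lemma sum4_swap_yv (A : 𝒰 → 𝒳 → 𝒴 → 𝒱 → ℝ) :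
    ∑ u, ∑ x, ∑ y, ∑ v, A u x y v = ∑ y, ∑ v, ∑ u, ∑ x, A u x y v := by
  rw [sum4_swap_y]
  refine Finset.sum_congr rfl fun y _ => ?_
  have h1 : ∑ u, ∑ x, ∑ v, A u x y v = ∑ u, ∑ v, ∑ x, A u x y v :=
    Finset.sum_congr rfl fun u _ => Finset.sum_comm
  rw [h1]
  exact Finset.sum_comm

variable (p : 𝒰 × 𝒳 × 𝒴 × 𝒱 → ℝ)

lemma margX_eq (x : 𝒳) :
    marg p (fun a => a.2.1) x = ∑ u, ∑ y, ∑ v, p (u, x, y, v) := by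
  simp only [marg, Fintype.sum_prod_type]
  refine Finset.sum_congr rfl fun u _ => ?_
  rw [Finset.sum_eq_single x]
  · simp
  · intro b _ hb; simp [hb]
  · intro h; simp at h

lemma margY_eq (y : 𝒴) :
    marg p (fun a => a.2.2.1) y = ∑ u, ∑ x, ∑ v, p (u, x, y, v) := by
  simp only [marg, Fintype.sum_prod_type]
  refine Finset.sum_congr rfl fun u _ => ?_
  refine Finset.sum_congr rfl fun x _ => ?_
  rw [Finset.sum_eq_single y]
  · simp
  · intro b _ hb; simp [hb]
  · intro h; simp at h

lemma margUX_eq (u : 𝒰) (x : 𝒳) :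
    marg p (fun a => (a.1, a.2.1)) (u, x) = ∑ y, ∑ v, p (u, x, y, v) := by
  simp only [marg, Fintype.sum_prod_type, Prod.mk.injEq]
  rw [Finset.sum_eq_single u]
  · rw [Finset.sum_eq_single x]
    · simp
    · intro b _ hb; simp [hb]
    · intro h; simp at h
  · intro b _ hb; simp [hb]
  · intro h; simp at h

lemma margXY_eq (x : 𝒳) (y : 𝒴) :
    marg p (fun a => (a.2.1, a.2.2.1)) (x, y) = ∑ u, ∑ v, p (u, x, y, v) := by
  simp only [marg, Fintype.sum_prod_type, Prod.mk.injEq]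
  refine Finset.sum_congr rfl fun u _ => ?_
  rw [Finset.sum_eq_single x]
  · rw [Finset.sum_eq_single y]
    · simp
    · intro b _ hb; simp [hb]
    · intro h; simp at h
  · intro b _ hb; simp [hb]
  · intro h; simp at h

lemma margYV_eq (y : 𝒴) (v : 𝒱) :
    marg p (fun a => (a.2.2.1, a.2.2.2)) (y, v) = ∑ u, ∑ x, p (u, x, y, v) := by
  simp only [marg, Fintype.sum_prod_type, Prod.mk.injEq]
  refine Finset.sum_congr rfl fun u _ => ?_
  refine Finset.sum_congr rfl fun x _ => ?_
  rw [Finset.sum_eq_single y]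
  · rw [Finset.sum_eq_single v]
    · simp
    · intro b _ hb; simp [hb]
    · intro h; simp at h
  · intro b _ hb; simp [hb]
  · intro h; simp at h

lemma expec_eq (h : 𝒰 × 𝒳 × 𝒴 × 𝒱 → ℝ) :
    expec p h = ∑ u, ∑ x, ∑ y, ∑ v, p (u, x, y, v) * h (u, x, y, v) := by
  simp [expec, Fintype.sum_prod_type]


lemma pull1 {α : Type} [Fintype α] (B : α → ℝ) (c : ℝ) :
    ∑ a, B a * c = (∑ a, B a) * c := (Finset.sum_mul _ _ _).symm

lemma pull2 {α β : Type} [Fintype α] [Fintype β] (B : α → β → ℝ) (c : ℝ) :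
    ∑ a, ∑ b, B a b * c = (∑ a, ∑ b, B a b) * c := by
  rw [Finset.sum_mul]
  exact Finset.sum_congr rfl fun a _ => pull1 _ _

lemma pull3 {α β γ : Type} [Fintype α] [Fintype β] [Fintype γ] (B : α → β → γ → ℝ) (c : ℝ) :
    ∑ a, ∑ b, ∑ d, B a b d * c = (∑ a, ∑ b, ∑ d, B a b d) * c := by
  rw [Finset.sum_mul]
  exact Finset.sum_congr rfl fun a _ => pull2 _ _

lemma pz_x (hp0 : ∀ a, 0 ≤ p a) {x : 𝒳} (hx : marg p (fun a => a.2.1) x = 0)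
    (u : 𝒰) (y : 𝒴) (v : 𝒱) : p (u, x, y, v) = 0 :=
  marg_eq_zero p _ x hp0 hx (u, x, y, v) rfl

lemma pz_y (hp0 : ∀ a, 0 ≤ p a) {y : 𝒴} (hy : marg p (fun a => a.2.2.1) y = 0)
    (u : 𝒰) (x : 𝒳) (v : 𝒱) : p (u, x, y, v) = 0 :=
  marg_eq_zero p _ y hp0 hy (u, x, y, v) rfl

lemma margUX_zero (hp0 : ∀ a, 0 ≤ p a) {x : 𝒳} (hx : marg p (fun a => a.2.1) x = 0)
    (u : 𝒰) : marg p (fun a => (a.1, a.2.1)) (u, x) = 0 := by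
  rw [margUX_eq]
  exact Finset.sum_eq_zero fun y _ => Finset.sum_eq_zero fun v _ => pz_x p hp0 hx u y v

lemma margXY_zero_left (hp0 : ∀ a, 0 ≤ p a) {x : 𝒳} (hx : marg p (fun a => a.2.1) x = 0)
    (y : 𝒴) : marg p (fun a => (a.2.1, a.2.2.1)) (x, y) = 0 := by
  rw [margXY_eq]
  exact Finset.sum_eq_zero fun u _ => Finset.sum_eq_zero fun v _ => pz_x p hp0 hx u y v

lemma margXY_zero_right (hp0 : ∀ a, 0 ≤ p a) {y : 𝒴} (hy : marg p (fun a => a.2.2.1) y = 0)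
    (x : 𝒳) : marg p (fun a => (a.2.1, a.2.2.1)) (x, y) = 0 := by
  rw [margXY_eq]
  exact Finset.sum_eq_zero fun u _ => Finset.sum_eq_zero fun v _ => pz_y p hp0 hy u x v

lemma margYV_zero (hp0 : ∀ a, 0 ≤ p a) {y : 𝒴} (hy : marg p (fun a => a.2.2.1) y = 0)
    (v : 𝒱) : marg p (fun a => (a.2.2.1, a.2.2.2)) (y, v) = 0 := by
  rw [margYV_eq]
  exact Finset.sum_eq_zero fun u _ => Finset.sum_eq_zero fun x _ => pz_y p hp0 hy u x v

lemma pz_xy (hp0 : ∀ a, 0 ≤ p a)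
    (hM : ∀ (u : 𝒰) (x : 𝒳) (y : 𝒴) (v : 𝒱),
      p (u, x, y, v) * marg p (fun a => a.2.1) x * marg p (fun a => a.2.2.1) y =
        marg p (fun a => (a.1, a.2.1)) (u, x) *
          marg p (fun a => (a.2.1, a.2.2.1)) (x, y) *
          marg p (fun a => (a.2.2.1, a.2.2.2)) (y, v))
    {x : 𝒳} {y : 𝒴} (hxy : marg p (fun a => (a.2.1, a.2.2.1)) (x, y) = 0)
    (u : 𝒰) (v : 𝒱) : p (u, x, y, v) = 0 := by
  by_cases hx : marg p (fun a => a.2.1) x = 0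
  · exact pz_x p hp0 hx u y v
  by_cases hy : marg p (fun a => a.2.2.1) y = 0
  · exact pz_y p hp0 hy u x v
  have h := hM u x y v
  rw [hxy, mul_zero, zero_mul] at h
  rcases mul_eq_zero.1 h with h1 | h1
  · rcases mul_eq_zero.1 h1 with h2 | h2
    · exact h2
    · exact absurd h2 hx
  · exact absurd h1 hy

lemma sumUX (x : 𝒳) :
    ∑ u, marg p (fun a => (a.1, a.2.1)) (u, x) = marg p (fun a => a.2.1) x := by
  rw [margX_eq]
  exact Finset.sum_congr rfl fun u _ => margUX_eq p u x

lemma sumYV (y : 𝒴) :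
    ∑ v, marg p (fun a => (a.2.2.1, a.2.2.2)) (y, v) = marg p (fun a => a.2.2.1) y := by
  rw [margY_eq]
  calc ∑ v, marg p (fun a => (a.2.2.1, a.2.2.2)) (y, v)
      = ∑ v, ∑ u, ∑ x, p (u, x, y, v) :=
        Finset.sum_congr rfl fun v _ => margYV_eq p y v
    _ = ∑ u, ∑ v, ∑ x, p (u, x, y, v) := Finset.sum_comm
    _ = ∑ u, ∑ x, ∑ v, p (u, x, y, v) :=
        Finset.sum_congr rfl fun u _ => Finset.sum_comm

lemma hrep_aux
    (hM : ∀ (u : 𝒰) (x : 𝒳) (y : 𝒴) (v : 𝒱),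
      p (u, x, y, v) * marg p (fun a => a.2.1) x * marg p (fun a => a.2.2.1) y =
        marg p (fun a => (a.1, a.2.1)) (u, x) *
          marg p (fun a => (a.2.1, a.2.2.1)) (x, y) *
          marg p (fun a => (a.2.2.1, a.2.2.2)) (y, v))
    {x : 𝒳} {y : 𝒴} (hx : marg p (fun a => a.2.1) x ≠ 0)
    (hy : marg p (fun a => a.2.2.1) y ≠ 0) (u : 𝒰) (v : 𝒱) :
    p (u, x, y, v) =
      marg p (fun a => (a.1, a.2.1)) (u, x) *
        marg p (fun a => (a.2.1, a.2.2.1)) (x, y) *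
        marg p (fun a => (a.2.2.1, a.2.2.2)) (y, v) /
        (marg p (fun a => a.2.1) x * marg p (fun a => a.2.2.1) y) := by
  rw [eq_div_iff (mul_ne_zero hx hy), ← mul_assoc]
  exact hM u x y v

lemma fiberA (hp0 : ∀ a, 0 ≤ p a)
    (hM : ∀ (u : 𝒰) (x : 𝒳) (y : 𝒴) (v : 𝒱),
      p (u, x, y, v) * marg p (fun a => a.2.1) x * marg p (fun a => a.2.2.1) y =
        marg p (fun a => (a.1, a.2.1)) (u, x) *
          marg p (fun a => (a.2.1, a.2.2.1)) (x, y) *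
          marg p (fun a => (a.2.2.1, a.2.2.2)) (y, v))
    (φ : 𝒰 × 𝒳 → ℝ) (ψ : 𝒱 × 𝒴 → ℝ) (x : 𝒳) (y : 𝒴) :
    ∑ u, ∑ v, p (u, x, y, v) * (φ (u, x) * ψ (v, y)) =
      marg p (fun a => (a.2.1, a.2.2.1)) (x, y) *
        (((∑ u, marg p (fun a => (a.1, a.2.1)) (u, x) * φ (u, x)) /
            marg p (fun a => a.2.1) x) *
          ((∑ v, marg p (fun a => (a.2.2.1, a.2.2.2)) (y, v) * ψ (v, y)) /
            marg p (fun a => a.2.2.1) y)) := by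
  by_cases hx : marg p (fun a => a.2.1) x = 0
  · rw [margXY_zero_left p hp0 hx y, zero_mul]
    exact Finset.sum_eq_zero fun u _ => Finset.sum_eq_zero fun v _ => by
      rw [pz_x p hp0 hx u y v, zero_mul]
  by_cases hy : marg p (fun a => a.2.2.1) y = 0
  · rw [margXY_zero_right p hp0 hy x, zero_mul]
    exact Finset.sum_eq_zero fun u _ => Finset.sum_eq_zero fun v _ => by
      rw [pz_y p hp0 hy u x v, zero_mul]
  by_cases hxy : marg p (fun a => (a.2.1, a.2.2.1)) (x, y) = 0
  · rw [hxy, zero_mul]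
    exact Finset.sum_eq_zero fun u _ => Finset.sum_eq_zero fun v _ => by
      rw [pz_xy p hp0 hM hxy u v, zero_mul]
  calc ∑ u, ∑ v, p (u, x, y, v) * (φ (u, x) * ψ (v, y))
      = ∑ u, ∑ v, (marg p (fun a => (a.1, a.2.1)) (u, x) * φ (u, x) *
          (marg p (fun a => (a.2.1, a.2.2.1)) (x, y) /
            (marg p (fun a => a.2.1) x * marg p (fun a => a.2.2.1) y))) *
          (marg p (fun a => (a.2.2.1, a.2.2.2)) (y, v) * ψ (v, y)) := by
        refine Finset.sum_congr rfl fun u _ => Finset.sum_congr rfl fun v _ => ?_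
        rw [hrep_aux p hM hx hy u v]
        ring
    _ = (∑ u, marg p (fun a => (a.1, a.2.1)) (u, x) * φ (u, x) *
          (marg p (fun a => (a.2.1, a.2.2.1)) (x, y) /
            (marg p (fun a => a.2.1) x * marg p (fun a => a.2.2.1) y))) *
          (∑ v, marg p (fun a => (a.2.2.1, a.2.2.2)) (y, v) * ψ (v, y)) :=
        (Finset.sum_mul_sum _ _ _ _).symm
    _ = ((∑ u, marg p (fun a => (a.1, a.2.1)) (u, x) * φ (u, x)) *
          (marg p (fun a => (a.2.1, a.2.2.1)) (x, y) /
            (marg p (fun a => a.2.1) x * marg p (fun a => a.2.2.1) y))) *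
          (∑ v, marg p (fun a => (a.2.2.1, a.2.2.2)) (y, v) * ψ (v, y)) := by
        rw [pull1]
    _ = marg p (fun a => (a.2.1, a.2.2.1)) (x, y) *
        (((∑ u, marg p (fun a => (a.1, a.2.1)) (u, x) * φ (u, x)) /
            marg p (fun a => a.2.1) x) *
          ((∑ v, marg p (fun a => (a.2.2.1, a.2.2.2)) (y, v) * ψ (v, y)) /
            marg p (fun a => a.2.2.1) y)) := by
        field_simp

lemma P1 (hp0 : ∀ a, 0 ≤ p a)
    (hM : ∀ (u : 𝒰) (x : 𝒳) (y : 𝒴) (v : 𝒱),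
      p (u, x, y, v) * marg p (fun a => a.2.1) x * marg p (fun a => a.2.2.1) y =
        marg p (fun a => (a.1, a.2.1)) (u, x) *
          marg p (fun a => (a.2.1, a.2.2.1)) (x, y) *
          marg p (fun a => (a.2.2.1, a.2.2.2)) (y, v))
    (φ : 𝒰 × 𝒳 → ℝ) (ψ : 𝒱 × 𝒴 → ℝ) :
    expec p (fun a => φ (a.1, a.2.1) * ψ (a.2.2.2, a.2.2.1)) =
      expec p (fun a =>
        ((∑ u, marg p (fun a' => (a'.1, a'.2.1)) (u, a.2.1) * φ (u, a.2.1)) /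
            marg p (fun a' => a'.2.1) a.2.1) *
          ((∑ v, marg p (fun a' => (a'.2.2.1, a'.2.2.2)) (a.2.2.1, v) * ψ (v, a.2.2.1)) /
            marg p (fun a' => a'.2.2.1) a.2.2.1)) := by
  simp only [expec_eq]
  conv_lhs => rw [sum4_swap_xy]
  conv_rhs => rw [sum4_swap_xy]
  refine Finset.sum_congr rfl fun x _ => Finset.sum_congr rfl fun y _ => ?_
  rw [fiberA p hp0 hM φ ψ x y]
  rw [pull2, ← margXY_eq]

lemma P2 (hp0 : ∀ a, 0 ≤ p a) (φ : 𝒰 × 𝒳 → ℝ) :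
    expec p (fun a => φ (a.1, a.2.1)) =
      expec p (fun a =>
        (∑ u, marg p (fun a' => (a'.1, a'.2.1)) (u, a.2.1) * φ (u, a.2.1)) /
          marg p (fun a' => a'.2.1) a.2.1) := by
  simp only [expec_eq]
  conv_lhs => rw [sum4_swap_x]
  conv_rhs => rw [sum4_swap_x]
  refine Finset.sum_congr rfl fun x _ => ?_
  have hL : ∑ u, ∑ y, ∑ v, p (u, x, y, v) * φ (u, x) =
      ∑ u, marg p (fun a' => (a'.1, a'.2.1)) (u, x) * φ (u, x) :=
    Finset.sum_congr rfl fun u _ => by rw [pull2, ← margUX_eq]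
  rw [hL, pull3, ← margX_eq]
  by_cases hx : marg p (fun a' => a'.2.1) x = 0
  · rw [hx, zero_mul]
    exact Finset.sum_eq_zero fun u _ => by rw [margUX_zero p hp0 hx u, zero_mul]
  · field_simp

lemma P3 (hp0 : ∀ a, 0 ≤ p a) (φ : 𝒰 × 𝒳 → ℝ) :
    expec p (fun a =>
        ((∑ u, marg p (fun a' => (a'.1, a'.2.1)) (u, a.2.1) * φ (u, a.2.1)) /
          marg p (fun a' => a'.2.1) a.2.1) *
        ((∑ u, marg p (fun a' => (a'.1, a'.2.1)) (u, a.2.1) * φ (u, a.2.1)) /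
          marg p (fun a' => a'.2.1) a.2.1)) ≤
      expec p (fun a => φ (a.1, a.2.1) * φ (a.1, a.2.1)) := by
  simp only [expec_eq]
  conv_lhs => rw [sum4_swap_x]
  conv_rhs => rw [sum4_swap_x]
  refine Finset.sum_le_sum fun x _ => ?_
  have hL : ∑ u, ∑ y, ∑ v, p (u, x, y, v) * (φ (u, x) * φ (u, x)) =
      ∑ u, marg p (fun a' => (a'.1, a'.2.1)) (u, x) * (φ (u, x) * φ (u, x)) :=
    Finset.sum_congr rfl fun u _ => by rw [pull2, ← margUX_eq]
  rw [hL, pull3, ← margX_eq]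
  by_cases hx : marg p (fun a' => a'.2.1) x = 0
  · rw [hx, zero_mul]
    exact Finset.sum_nonneg fun u _ => mul_nonneg (marg_nonneg p _ _ hp0) (mul_self_nonneg _)
  · have hx' : 0 < marg p (fun a' => a'.2.1) x :=
      lt_of_le_of_ne (marg_nonneg p _ _ hp0) (Ne.symm hx)
    have hcs := weighted_cs (fun u => marg p (fun a' => (a'.1, a'.2.1)) (u, x))
      (fun _ => (1 : ℝ)) (fun u => φ (u, x)) (fun u => marg_nonneg p _ _ hp0)
    simp only [one_mul, one_pow, mul_one] at hcs
    rw [sumUX] at hcs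
    set m := marg p (fun a' => a'.2.1) x
    set A := ∑ u, marg p (fun a' => (a'.1, a'.2.1)) (u, x) * φ (u, x)
    set B := ∑ u, marg p (fun a' => (a'.1, a'.2.1)) (u, x) * (φ (u, x) * φ (u, x))
    have hAB : A ^ 2 ≤ m * B := by
      calc A ^ 2 = (∑ u, marg p (fun a' => (a'.1, a'.2.1)) (u, x) * φ (u, x)) ^ 2 := rfl
        _ ≤ m * ∑ u, marg p (fun a' => (a'.1, a'.2.1)) (u, x) * φ (u, x) ^ 2 := hcs
        _ = m * B := by
            congr 1
            exact Finset.sum_congr rfl fun u _ => by rw [pow_two]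
    have hkey : m * (A / m * (A / m)) = A ^ 2 / m := by
      field_simp
    rw [hkey, div_le_iff₀ hx']
    calc A ^ 2 ≤ m * B := hAB
      _ = B * m := mul_comm _ _

lemma P2' (hp0 : ∀ a, 0 ≤ p a) (ψ : 𝒱 × 𝒴 → ℝ) :
    expec p (fun a => ψ (a.2.2.2, a.2.2.1)) =
      expec p (fun a =>
        (∑ v, marg p (fun a' => (a'.2.2.1, a'.2.2.2)) (a.2.2.1, v) * ψ (v, a.2.2.1)) /
          marg p (fun a' => a'.2.2.1) a.2.2.1) := by
  simp only [expec_eq]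
  conv_lhs => rw [sum4_swap_yv]
  conv_rhs => rw [sum4_swap_y]
  refine Finset.sum_congr rfl fun y _ => ?_
  have hL : ∑ v, ∑ u, ∑ x, p (u, x, y, v) * ψ (v, y) =
      ∑ v, marg p (fun a' => (a'.2.2.1, a'.2.2.2)) (y, v) * ψ (v, y) :=
    Finset.sum_congr rfl fun v _ => by rw [pull2, ← margYV_eq]
  rw [hL, pull3, ← margY_eq]
  by_cases hy : marg p (fun a' => a'.2.2.1) y = 0
  · rw [hy, zero_mul]
    exact Finset.sum_eq_zero fun v _ => by rw [margYV_zero p hp0 hy v, zero_mul]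
  · field_simp

lemma P3' (hp0 : ∀ a, 0 ≤ p a) (ψ : 𝒱 × 𝒴 → ℝ) :
    expec p (fun a =>
        ((∑ v, marg p (fun a' => (a'.2.2.1, a'.2.2.2)) (a.2.2.1, v) * ψ (v, a.2.2.1)) /
          marg p (fun a' => a'.2.2.1) a.2.2.1) *
        ((∑ v, marg p (fun a' => (a'.2.2.1, a'.2.2.2)) (a.2.2.1, v) * ψ (v, a.2.2.1)) /
          marg p (fun a' => a'.2.2.1) a.2.2.1)) ≤
      expec p (fun a => ψ (a.2.2.2, a.2.2.1) * ψ (a.2.2.2, a.2.2.1)) := by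
  simp only [expec_eq]
  conv_lhs => rw [sum4_swap_y]
  conv_rhs => rw [sum4_swap_yv]
  refine Finset.sum_le_sum fun y _ => ?_
  have hL : ∑ v, ∑ u, ∑ x, p (u, x, y, v) * (ψ (v, y) * ψ (v, y)) =
      ∑ v, marg p (fun a' => (a'.2.2.1, a'.2.2.2)) (y, v) * (ψ (v, y) * ψ (v, y)) :=
    Finset.sum_congr rfl fun v _ => by rw [pull2, ← margYV_eq]
  rw [hL, pull3, ← margY_eq]
  by_cases hy : marg p (fun a' => a'.2.2.1) y = 0
  · rw [hy, zero_mul]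
    exact Finset.sum_nonneg fun v _ => mul_nonneg (marg_nonneg p _ _ hp0) (mul_self_nonneg _)
  · have hy' : 0 < marg p (fun a' => a'.2.2.1) y :=
      lt_of_le_of_ne (marg_nonneg p _ _ hp0) (Ne.symm hy)
    have hcs := weighted_cs (fun v => marg p (fun a' => (a'.2.2.1, a'.2.2.2)) (y, v))
      (fun _ => (1 : ℝ)) (fun v => ψ (v, y)) (fun v => marg_nonneg p _ _ hp0)
    simp only [one_mul, one_pow, mul_one] at hcs
    rw [sumYV] at hcs
    set m := marg p (fun a' => a'.2.2.1) y
    set A := ∑ v, marg p (fun a' => (a'.2.2.1, a'.2.2.2)) (y, v) * ψ (v, y)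
    set B := ∑ v, marg p (fun a' => (a'.2.2.1, a'.2.2.2)) (y, v) * (ψ (v, y) * ψ (v, y))
    have hAB : A ^ 2 ≤ m * B := by
      calc A ^ 2 = (∑ v, marg p (fun a' => (a'.2.2.1, a'.2.2.2)) (y, v) * ψ (v, y)) ^ 2 := rfl
        _ ≤ m * ∑ v, marg p (fun a' => (a'.2.2.1, a'.2.2.2)) (y, v) * ψ (v, y) ^ 2 := hcs
        _ = m * B := by
            congr 1
            exact Finset.sum_congr rfl fun v _ => by rw [pow_two]
    have hkey : m * (A / m * (A / m)) = A ^ 2 / m := by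
      field_simp
    rw [hkey, div_le_iff₀ hy']
    calc A ^ 2 ≤ m * B := hAB
      _ = B * m := mul_comm _ _


lemma inner_sum_eq {α β : Type} [Fintype α] [Fintype β]
    (q : α → β → ℝ) (ma : α → ℝ) (mb : β → ℝ) (mx my c : ℝ) (F : α → ℝ)
    (hq : ∀ a b, q a b = ma a * c * mb b / (mx * my))
    (hmb : ∑ b, mb b = my) (hmx : mx ≠ 0) (hmy : my ≠ 0) :
    ∑ a, ∑ b, q a b * F a = c * (∑ a, ma a * F a) / mx := by
  calc ∑ a, ∑ b, q a b * F a
      = ∑ a, ∑ b, (ma a * F a * (c / (mx * my))) * mb b := by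
        refine Finset.sum_congr rfl fun a _ => Finset.sum_congr rfl fun b _ => ?_
        rw [hq a b]; ring
    _ = (∑ a, ma a * F a * (c / (mx * my))) * (∑ b, mb b) :=
        (Finset.sum_mul_sum _ _ _ _).symm
    _ = ((∑ a, ma a * F a) * (c / (mx * my))) * my := by rw [pull1, hmb]
    _ = c * (∑ a, ma a * F a) / mx := by field_simp

lemma inner_sum_eq' {α β : Type} [Fintype α] [Fintype β]
    (q : α → β → ℝ) (ma : α → ℝ) (mb : β → ℝ) (mx my c : ℝ) (G : β → ℝ)
    (hq : ∀ a b, q a b = ma a * c * mb b / (mx * my))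
    (hma : ∑ a, ma a = mx) (hmx : mx ≠ 0) (hmy : my ≠ 0) :
    ∑ a, ∑ b, q a b * G b = c * (∑ b, mb b * G b) / my := by
  rw [Finset.sum_comm]
  calc ∑ b, ∑ a, q a b * G b
      = ∑ b, ∑ a, (mb b * G b * (c / (mx * my))) * ma a := by
        refine Finset.sum_congr rfl fun b _ => Finset.sum_congr rfl fun a _ => ?_
        rw [hq a b]; ring
    _ = (∑ b, mb b * G b * (c / (mx * my))) * (∑ a, ma a) :=
        (Finset.sum_mul_sum _ _ _ _).symm
    _ = ((∑ b, mb b * G b) * (c / (mx * my))) * mx := by rw [pull1, hma]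
    _ = c * (∑ b, mb b * G b) / my := by field_simp

lemma inner_zero {α β : Type} [Fintype α] [Fintype β]
    (q : α → β → ℝ) (ma : α → ℝ) (mb : β → ℝ) (mx my c : ℝ)
    (F : α → ℝ) (G : β → ℝ)
    (hq : ∀ a b, q a b = ma a * c * mb b / (mx * my))
    (hma : ∑ a, ma a = mx)
    (hmx : mx ≠ 0) (hmy : my ≠ 0) :
    ∑ a, ∑ b, q a b * ((F a - (∑ a', ma a' * F a') / mx) *
      (G b - (∑ b', mb b' * G b') / my)) = 0 := by
  calc ∑ a, ∑ b, q a b * ((F a - (∑ a', ma a' * F a') / mx) *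
        (G b - (∑ b', mb b' * G b') / my))
      = ∑ a, ∑ b, (ma a * (F a - (∑ a', ma a' * F a') / mx) * (c / (mx * my))) *
          (mb b * (G b - (∑ b', mb b' * G b') / my)) := by
        refine Finset.sum_congr rfl fun a _ => Finset.sum_congr rfl fun b _ => ?_
        rw [hq a b]; ring
    _ = (∑ a, ma a * (F a - (∑ a', ma a' * F a') / mx) * (c / (mx * my))) *
          (∑ b, mb b * (G b - (∑ b', mb b' * G b') / my)) :=
        (Finset.sum_mul_sum _ _ _ _).symm
    _ = 0 := by
        have h1 : ∑ a, ma a * (F a - (∑ a', ma a' * F a') / mx) * (c / (mx * my)) = 0 := by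
          have expand : ∀ a, ma a * (F a - (∑ a', ma a' * F a') / mx) * (c / (mx * my)) =
              (ma a * F a) * (c / (mx * my)) -
                ((∑ a', ma a' * F a') / mx * (c / (mx * my))) * ma a := by
            intro a; ring
          rw [Finset.sum_congr rfl fun a _ => expand a, Finset.sum_sub_distrib, pull1,
            ← Finset.mul_sum, hma]
          field_simp
          ring
        rw [h1, zero_mul]

lemma ccov_cond_zero (hp0 : ∀ a, 0 ≤ p a)
    (hM : ∀ (u : 𝒰) (x : 𝒳) (y : 𝒴) (v : 𝒱),
      p (u, x, y, v) * marg p (fun a => a.2.1) x * marg p (fun a => a.2.2.1) y =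
        marg p (fun a => (a.1, a.2.1)) (u, x) *
          marg p (fun a => (a.2.1, a.2.2.1)) (x, y) *
          marg p (fun a => (a.2.2.1, a.2.2.2)) (y, v))
    (f : 𝒰 × (𝒳 × 𝒴) → ℝ) (g : 𝒱 × (𝒳 × 𝒴) → ℝ) :
    ccov p (fun a => (a.2.1, a.2.2.1)) (fun a => f (a.1, (a.2.1, a.2.2.1)))
      (fun a => g (a.2.2.2, (a.2.1, a.2.2.1))) = 0 := by
  unfold ccov
  simp only [expec_eq]
  conv_lhs => rw [sum4_swap_xy]
  refine Finset.sum_eq_zero fun x _ => Finset.sum_eq_zero fun y _ => ?_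
  by_cases hxy : marg p (fun a => (a.2.1, a.2.2.1)) (x, y) = 0
  · exact Finset.sum_eq_zero fun u _ => Finset.sum_eq_zero fun v _ => by
      rw [pz_xy p hp0 hM hxy u v, zero_mul]
  have hx : marg p (fun a => a.2.1) x ≠ 0 := fun h => hxy (margXY_zero_left p hp0 h y)
  have hy : marg p (fun a => a.2.2.1) y ≠ 0 := fun h => hxy (margXY_zero_right p hp0 h x)
  have hq : ∀ u v, p (u, x, y, v) =
      marg p (fun a => (a.1, a.2.1)) (u, x) *
        marg p (fun a => (a.2.1, a.2.2.1)) (x, y) *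
        marg p (fun a => (a.2.2.1, a.2.2.2)) (y, v) /
        (marg p (fun a => a.2.1) x * marg p (fun a => a.2.2.1) y) :=
    fun u v => hrep_aux p hM hx hy u v
  have hma : ∑ u, marg p (fun a => (a.1, a.2.1)) (u, x) = marg p (fun a => a.2.1) x :=
    sumUX p x
  have hmb : ∑ v, marg p (fun a => (a.2.2.1, a.2.2.2)) (y, v) =
      marg p (fun a => a.2.2.1) y := sumYV p y
  have hcF : cexp p (fun a => (a.2.1, a.2.2.1)) (x, y)
      (fun a => f (a.1, (a.2.1, a.2.2.1))) =
      (∑ u, marg p (fun a => (a.1, a.2.1)) (u, x) * f (u, (x, y))) /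
        marg p (fun a => a.2.1) x := by
    have hnum : marg (fun a => p a * f (a.1, (a.2.1, a.2.2.1)))
        (fun a => (a.2.1, a.2.2.1)) (x, y) =
        ∑ u, ∑ v, p (u, x, y, v) * f (u, (x, y)) :=
      margXY_eq (fun a => p a * f (a.1, (a.2.1, a.2.2.1))) x y
    have hA : ∑ u, ∑ v, p (u, x, y, v) * f (u, (x, y)) =
        marg p (fun a => (a.2.1, a.2.2.1)) (x, y) *
          (∑ u, marg p (fun a => (a.1, a.2.1)) (u, x) * f (u, (x, y))) /
          marg p (fun a => a.2.1) x :=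
      inner_sum_eq (fun u v => p (u, x, y, v))
        (fun u => marg p (fun a => (a.1, a.2.1)) (u, x))
        (fun v => marg p (fun a => (a.2.2.1, a.2.2.2)) (y, v))
        (marg p (fun a => a.2.1) x) (marg p (fun a => a.2.2.1) y)
        (marg p (fun a => (a.2.1, a.2.2.1)) (x, y))
        (fun u => f (u, (x, y))) hq hmb hx hy
    rw [show cexp p (fun a => (a.2.1, a.2.2.1)) (x, y)
        (fun a => f (a.1, (a.2.1, a.2.2.1))) =
        marg (fun a => p a * f (a.1, (a.2.1, a.2.2.1)))
          (fun a => (a.2.1, a.2.2.1)) (x, y) /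
          marg p (fun a => (a.2.1, a.2.2.1)) (x, y) from rfl, hnum, hA]
    rw [mul_div_assoc]
    exact mul_div_cancel_left₀ _ hxy
  have hcG : cexp p (fun a => (a.2.1, a.2.2.1)) (x, y)
      (fun a => g (a.2.2.2, (a.2.1, a.2.2.1))) =
      (∑ v, marg p (fun a => (a.2.2.1, a.2.2.2)) (y, v) * g (v, (x, y))) /
        marg p (fun a => a.2.2.1) y := by
    have hnum : marg (fun a => p a * g (a.2.2.2, (a.2.1, a.2.2.1)))
        (fun a => (a.2.1, a.2.2.1)) (x, y) =
        ∑ u, ∑ v, p (u, x, y, v) * g (v, (x, y)) :=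
      margXY_eq (fun a => p a * g (a.2.2.2, (a.2.1, a.2.2.1))) x y
    have hB : ∑ u, ∑ v, p (u, x, y, v) * g (v, (x, y)) =
        marg p (fun a => (a.2.1, a.2.2.1)) (x, y) *
          (∑ v, marg p (fun a => (a.2.2.1, a.2.2.2)) (y, v) * g (v, (x, y))) /
          marg p (fun a => a.2.2.1) y :=
      inner_sum_eq' (fun u v => p (u, x, y, v))
        (fun u => marg p (fun a => (a.1, a.2.1)) (u, x))
        (fun v => marg p (fun a => (a.2.2.1, a.2.2.2)) (y, v))
        (marg p (fun a => a.2.1) x) (marg p (fun a => a.2.2.1) y)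
        (marg p (fun a => (a.2.1, a.2.2.1)) (x, y))
        (fun v => g (v, (x, y))) hq hma hx hy
    rw [show cexp p (fun a => (a.2.1, a.2.2.1)) (x, y)
        (fun a => g (a.2.2.2, (a.2.1, a.2.2.1))) =
        marg (fun a => p a * g (a.2.2.2, (a.2.1, a.2.2.1)))
          (fun a => (a.2.1, a.2.2.1)) (x, y) /
          marg p (fun a => (a.2.1, a.2.2.1)) (x, y) from rfl, hnum, hB]
    rw [mul_div_assoc]
    exact mul_div_cancel_left₀ _ hxy
  rw [hcF, hcG]
  exact inner_zero (fun u v => p (u, x, y, v))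
    (fun u => marg p (fun a => (a.1, a.2.1)) (u, x))
    (fun v => marg p (fun a => (a.2.2.1, a.2.2.2)) (y, v))
    (marg p (fun a => a.2.1) x) (marg p (fun a => a.2.2.1) y)
    (marg p (fun a => (a.2.1, a.2.2.1)) (x, y))
    (fun u => f (u, (x, y))) (fun v => g (v, (x, y))) hq hma hx hy

lemma ccorr_cond_zero (hp0 : ∀ a, 0 ≤ p a)
    (hM : ∀ (u : 𝒰) (x : 𝒳) (y : 𝒴) (v : 𝒱),
      p (u, x, y, v) * marg p (fun a => a.2.1) x * marg p (fun a => a.2.2.1) y =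
        marg p (fun a => (a.1, a.2.1)) (u, x) *
          marg p (fun a => (a.2.1, a.2.2.1)) (x, y) *
          marg p (fun a => (a.2.2.1, a.2.2.2)) (y, v))
    (f : 𝒰 × (𝒳 × 𝒴) → ℝ) (g : 𝒱 × (𝒳 × 𝒴) → ℝ) :
    ccorr p (fun a => (a.2.1, a.2.2.1)) (fun a => f (a.1, (a.2.1, a.2.2.1)))
      (fun a => g (a.2.2.2, (a.2.1, a.2.2.1))) = 0 := by
  unfold ccorr
  split
  · rw [ccov_cond_zero p hp0 hM f g, zero_div]
  · rfl


lemma ccorr_zero_zero {𝒰' : Type} (p : Ω → ℝ) (U : Ω → 𝒰') :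
    ccorr p U (fun _ => (0 : ℝ)) (fun _ => (0 : ℝ)) = 0 := by
  simp [ccorr, cvar, ccov, cexp, expec]

lemma corr_proj_le {𝒳0 𝒴0 : Type} (p : Ω → ℝ) (hp : IsPMF p)
    (X0 : Ω → 𝒳0) (Y0 : Ω → 𝒴0) (f' g' : Ω → ℝ) (F : 𝒳0 → ℝ) (G : 𝒴0 → ℝ)
    (hR0 : 0 ≤ maxCorr0 p X0 Y0)
    (h1 : expec p (fun ω => f' ω * g' ω) = expec p (fun ω => F (X0 ω) * G (Y0 ω)))
    (h2 : expec p f' = expec p (fun ω => F (X0 ω)))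
    (h3 : expec p g' = expec p (fun ω => G (Y0 ω)))
    (h4 : expec p (fun ω => F (X0 ω) * F (X0 ω)) ≤ expec p (fun ω => f' ω * f' ω))
    (h5 : expec p (fun ω => G (Y0 ω) * G (Y0 ω)) ≤ expec p (fun ω => g' ω * g' ω)) :
    ccorr p (fun _ => ()) f' g' ≤ maxCorr0 p X0 Y0 := by
  have hC : ccov p (fun _ => ()) f' g' =
      ccov p (fun _ => ()) (fun ω => F (X0 ω)) (fun ω => G (Y0 ω)) := by
    rw [ccov0_eq p hp, ccov0_eq p hp, h1, h2, h3]
  have hvF : cvar p (fun _ => ()) (fun ω => F (X0 ω)) ≤ cvar p (fun _ => ()) f' := by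
    rw [cvar0_eq p hp, cvar0_eq p hp, ← h2]
    linarith
  have hvG : cvar p (fun _ => ()) (fun ω => G (Y0 ω)) ≤ cvar p (fun _ => ()) g' := by
    rw [cvar0_eq p hp, cvar0_eq p hp, ← h3]
    linarith
  have hvF0 : 0 ≤ cvar p (fun _ => ()) (fun ω => F (X0 ω)) := cvar_nonneg p _ _ hp.1
  have hvG0 : 0 ≤ cvar p (fun _ => ()) (fun ω => G (Y0 ω)) := cvar_nonneg p _ _ hp.1
  have hvf0 : 0 ≤ cvar p (fun _ => ()) f' := cvar_nonneg p _ _ hp.1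
  have hvg0 : 0 ≤ cvar p (fun _ => ()) g' := cvar_nonneg p _ _ hp.1
  unfold ccorr
  split
  · rename_i h
    have hf : 0 < cvar p (fun _ => ()) f' := by nlinarith
    have hg : 0 < cvar p (fun _ => ()) g' := by nlinarith
    rcases le_or_gt (ccov p (fun _ => ()) f' g') 0 with hc0 | hc0
    · have hd : 0 ≤ Real.sqrt (cvar p (fun _ => ()) f') *
          Real.sqrt (cvar p (fun _ => ()) g') := by positivity
      exact (div_nonpos_of_nonpos_of_nonneg hc0 hd).trans hR0
    · have hC2 : 0 < ccov p (fun _ => ()) (fun ω => F (X0 ω)) (fun ω => G (Y0 ω)) :=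
        hC ▸ hc0
      have hCS := ccov_sq_le p (fun _ => ()) (fun ω => F (X0 ω)) (fun ω => G (Y0 ω)) hp.1
      have hvFpos : 0 < cvar p (fun _ => ()) (fun ω => F (X0 ω)) := by nlinarith
      have hvGpos : 0 < cvar p (fun _ => ()) (fun ω => G (Y0 ω)) := by nlinarith
      have hstep : ccov p (fun _ => ()) f' g' /
          (Real.sqrt (cvar p (fun _ => ()) f') * Real.sqrt (cvar p (fun _ => ()) g')) ≤
          ccov p (fun _ => ()) (fun ω => F (X0 ω)) (fun ω => G (Y0 ω)) /
          (Real.sqrt (cvar p (fun _ => ()) (fun ω => F (X0 ω))) *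
            Real.sqrt (cvar p (fun _ => ()) (fun ω => G (Y0 ω)))) := by
        rw [hC]
        gcongr
      have hccorrFG : ccov p (fun _ => ()) (fun ω => F (X0 ω)) (fun ω => G (Y0 ω)) /
          (Real.sqrt (cvar p (fun _ => ()) (fun ω => F (X0 ω))) *
            Real.sqrt (cvar p (fun _ => ()) (fun ω => G (Y0 ω)))) =
          ccorr p (fun _ => ()) (fun ω => F (X0 ω)) (fun ω => G (Y0 ω)) := by
        unfold ccorr
        rw [if_pos (mul_pos hvFpos hvGpos)]
      have hfin : ∀ (f1 : 𝒳0 × Unit → ℝ) (g1 : 𝒴0 × Unit → ℝ),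
          ccorr p (fun _ => ()) (fun ω => f1 (X0 ω, ())) (fun ω => g1 (Y0 ω, ())) ≤ 1 :=
        fun f1 g1 => ccorr_le_one p _ _ _ hp.1
      have hle := le_iSup2 (fun (f1 : 𝒳0 × Unit → ℝ) (g1 : 𝒴0 × Unit → ℝ) =>
          ccorr p (fun _ => ()) (fun ω => f1 (X0 ω, ())) (fun ω => g1 (Y0 ω, ()))) hfin
          (fun z => F z.1) (fun z => G z.1)
      calc ccov p (fun _ => ()) f' g' /
            (Real.sqrt (cvar p (fun _ => ()) f') * Real.sqrt (cvar p (fun _ => ()) g'))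
          ≤ ccov p (fun _ => ()) (fun ω => F (X0 ω)) (fun ω => G (Y0 ω)) /
            (Real.sqrt (cvar p (fun _ => ()) (fun ω => F (X0 ω))) *
              Real.sqrt (cvar p (fun _ => ()) (fun ω => G (Y0 ω)))) := hstep
        _ = ccorr p (fun _ => ()) (fun ω => F (X0 ω)) (fun ω => G (Y0 ω)) := hccorrFG
        _ ≤ maxCorr0 p X0 Y0 := hle
  · exact hR0

variable {𝒰 𝒳 𝒴 𝒱 : Type} [Fintype 𝒰] [Fintype 𝒳] [Fintype 𝒴] [Fintype 𝒱]
  (p : 𝒰 × 𝒳 × 𝒴 × 𝒱 → ℝ)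

lemma term_le (hp : IsPMF p)
    (hM : ∀ (u : 𝒰) (x : 𝒳) (y : 𝒴) (v : 𝒱),
      p (u, x, y, v) * marg p (fun a => a.2.1) x * marg p (fun a => a.2.2.1) y =
        marg p (fun a => (a.1, a.2.1)) (u, x) *
          marg p (fun a => (a.2.1, a.2.2.1)) (x, y) *
          marg p (fun a => (a.2.2.1, a.2.2.2)) (y, v))
    (hR0 : 0 ≤ maxCorr0 p (fun a => a.2.1) (fun a => a.2.2.1))
    (f : (𝒰 × 𝒳) × Unit → ℝ) (g : (𝒱 × 𝒴) × Unit → ℝ) :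
    ccorr p (fun _ => ()) (fun a => f ((a.1, a.2.1), ()))
      (fun a => g ((a.2.2.2, a.2.2.1), ())) ≤
      maxCorr0 p (fun a => a.2.1) (fun a => a.2.2.1) := by
  refine corr_proj_le p hp (fun a => a.2.1) (fun a => a.2.2.1)
    (fun a => f ((a.1, a.2.1), ())) (fun a => g ((a.2.2.2, a.2.2.1), ()))
    (fun x => (∑ u, marg p (fun a' => (a'.1, a'.2.1)) (u, x) * f ((u, x), ())) /
      marg p (fun a' => a'.2.1) x)
    (fun y => (∑ v, marg p (fun a' => (a'.2.2.1, a'.2.2.2)) (y, v) * g ((v, y), ())) /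
      marg p (fun a' => a'.2.2.1) y)
    hR0 ?_ ?_ ?_ ?_ ?_
  · exact P1 p hp.1 hM (fun z => f (z, ())) (fun z => g (z, ()))
  · exact P2 p hp.1 (fun z => f (z, ()))
  · exact P2' p hp.1 (fun z => g (z, ()))
  · exact P3 p hp.1 (fun z => f (z, ()))
  · exact P3' p hp.1 (fun z => g (z, ()))


end Aux

/-- If `P_{UXYV} = P_{U|X}·P_{XY}·P_{V|Y}` (i.e. `U → X → Y` and
`X → Y → V` are Markov chains), then
`ρ_m((U,X);(V,Y)) = max{ρ_m(X;Y), ρ_m(U;V|(X,Y))}`. The factorization hypothesis is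
expressed as `P(u,x,y,v)·P_X(x)·P_Y(y) = P_{UX}(u,x)·P_{XY}(x,y)·P_{YV}(y,v)`. -/
theorem maxCorr_double_markov {𝒰 𝒳 𝒴 𝒱 : Type} [Fintype 𝒰] [Fintype 𝒳] [Fintype 𝒴]
    [Fintype 𝒱] (p : 𝒰 × 𝒳 × 𝒴 × 𝒱 → ℝ) (hp : IsPMF p)
    (hMarkov : ∀ (u : 𝒰) (x : 𝒳) (y : 𝒴) (v : 𝒱),
      p (u, x, y, v) * marg p (fun a => a.2.1) x * marg p (fun a => a.2.2.1) y =
        marg p (fun a => (a.1, a.2.1)) (u, x) *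
          marg p (fun a => (a.2.1, a.2.2.1)) (x, y) *
          marg p (fun a => (a.2.2.1, a.2.2.2)) (y, v)) :
    maxCorr0 p (fun a => (a.1, a.2.1)) (fun a => (a.2.2.2, a.2.2.1)) =
      max (maxCorr0 p (fun a => a.2.1) fun a => a.2.2.1)
        (maxCorr p (fun a => (a.2.1, a.2.2.1)) (fun a => a.1) fun a => a.2.2.2) := by
  have hp0 := hp.1
  have hR0 : 0 ≤ maxCorr0 p (fun a => a.2.1) (fun a => a.2.2.1) := by
    have hR1 : ∀ (f1 : 𝒳 × Unit → ℝ) (g1 : 𝒴 × Unit → ℝ),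
        ccorr p (fun _ => ()) (fun ω : 𝒰 × 𝒳 × 𝒴 × 𝒱 => f1 (ω.2.1, ()))
          (fun ω => g1 (ω.2.2.1, ())) ≤ 1 :=
      fun f1 g1 => ccorr_le_one p _ _ _ hp0
    have h00 : ccorr p (fun _ : 𝒰 × 𝒳 × 𝒴 × 𝒱 => ()) (fun _ => (0 : ℝ))
        (fun _ => (0 : ℝ)) = 0 := ccorr_zero_zero p _
    have hle := le_iSup2 (fun (f1 : 𝒳 × Unit → ℝ) (g1 : 𝒴 × Unit → ℝ) =>
        ccorr p (fun _ => ()) (fun ω : 𝒰 × 𝒳 × 𝒴 × 𝒱 => f1 (ω.2.1, ()))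
          (fun ω => g1 (ω.2.2.1, ()))) hR1 (fun _ => 0) (fun _ => 0)
    refine le_trans (le_of_eq h00.symm) ?_
    exact hle
  have hL0 : 0 ≤ maxCorr0 p (fun a => (a.1, a.2.1)) (fun a => (a.2.2.2, a.2.2.1)) := by
    have hL1 : ∀ (f1 : (𝒰 × 𝒳) × Unit → ℝ) (g1 : (𝒱 × 𝒴) × Unit → ℝ),
        ccorr p (fun _ => ()) (fun ω : 𝒰 × 𝒳 × 𝒴 × 𝒱 => f1 ((ω.1, ω.2.1), ()))
          (fun ω => g1 ((ω.2.2.2, ω.2.2.1), ())) ≤ 1 :=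
      fun f1 g1 => ccorr_le_one p _ _ _ hp0
    have h00 : ccorr p (fun _ : 𝒰 × 𝒳 × 𝒴 × 𝒱 => ()) (fun _ => (0 : ℝ))
        (fun _ => (0 : ℝ)) = 0 := ccorr_zero_zero p _
    have hle := le_iSup2 (fun (f1 : (𝒰 × 𝒳) × Unit → ℝ) (g1 : (𝒱 × 𝒴) × Unit → ℝ) =>
        ccorr p (fun _ => ()) (fun ω : 𝒰 × 𝒳 × 𝒴 × 𝒱 => f1 ((ω.1, ω.2.1), ()))
          (fun ω => g1 ((ω.2.2.2, ω.2.2.1), ()))) hL1 (fun _ => 0) (fun _ => 0)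
    refine le_trans (le_of_eq h00.symm) ?_
    exact hle
  have hZ : maxCorr p (fun a => (a.2.1, a.2.2.1)) (fun a => a.1) (fun a => a.2.2.2) = 0 := by
    have hterm : ∀ (f : 𝒰 × (𝒳 × 𝒴) → ℝ) (g : 𝒱 × (𝒳 × 𝒴) → ℝ),
        ccorr p (fun a => (a.2.1, a.2.2.1)) (fun a => f (a.1, (a.2.1, a.2.2.1)))
          (fun a => g (a.2.2.2, (a.2.1, a.2.2.1))) = 0 :=
      ccorr_cond_zero p hp0 hMarkov
    unfold maxCorr
    simp only [hterm, ciSup_const]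
  apply le_antisymm
  · rw [hZ, max_eq_left hR0]
    unfold maxCorr0 maxCorr
    exact iSup2_le _ (fun f g => term_le p hp hMarkov hR0 f g) hR0
  · apply max_le
    · unfold maxCorr0 maxCorr
      refine Real.iSup_le (fun f1 => Real.iSup_le (fun g1 => ?_) hL0) hL0
      exact le_iSup2 (fun (f : (𝒰 × 𝒳) × Unit → ℝ) (g : (𝒱 × 𝒴) × Unit → ℝ) =>
          ccorr p (fun _ => ()) (fun ω : 𝒰 × 𝒳 × 𝒴 × 𝒱 => f ((ω.1, ω.2.1), ()))
            (fun ω => g ((ω.2.2.2, ω.2.2.1), ())))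
        (fun f g => ccorr_le_one p _ _ _ hp0)
        (fun z => f1 (z.1.2, z.2)) (fun z => g1 (z.1.2, z.2))
    · rw [hZ]
      exact hL0

end GCI
end
end

section
/- Let U be a random variable on a finite alphabet and let (X₁,Y₁), …, (Xₙ,Yₙ) be pairs of random variables on finite alphabets such that, conditionally on U, the pairs are mutually independent (i.e., P_{X^nY^n|U=u} = ∏_{i=1}^n P_{X_iY_i|U=u} for every u with positive probability). Then ρ_m(X^n; Y^n | U) = max over 1 ≤ i ≤ n of ρ_m(X_i; Y_i | U), where X^n = (X₁,…,Xₙ) and Y^n = (Y₁,…,Yₙ). -/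
open scoped BigOperators Classical

noncomputable section

namespace GCI

variable {Ω : Type} [Fintype Ω]

/-! ### Auxiliary development for the tensorization theorem -/

section Aux

open Finset

variable {S T : Type} [Fintype S] [Fintype T]

/-- Uncentered (product-form) covariance under a weight `q`. -/
def cov0 (q : S → ℝ) (f g : S → ℝ) : ℝ :=
  expec q (fun s => f s * g s) - expec q f * expec q g

/-- Variance under a weight `q`. -/
def var0 (q : S → ℝ) (f : S → ℝ) : ℝ := cov0 q f f

lemma expec_congr {q f g : S → ℝ} (h : ∀ s, q s ≠ 0 → f s = g s) :
    expec q f = expec q g := by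
  unfold expec
  refine Finset.sum_congr rfl fun s _ => ?_
  by_cases hq : q s = 0
  · simp [hq]
  · rw [h s hq]

lemma cov0_congr {q f g f' g' : S → ℝ} (hf : ∀ s, q s ≠ 0 → f s = f' s)
    (hg : ∀ s, q s ≠ 0 → g s = g' s) : cov0 q f g = cov0 q f' g' := by
  unfold cov0
  rw [expec_congr hf, expec_congr hg, expec_congr (g := fun s => f' s * g' s)
    (fun s hq => by rw [hf s hq, hg s hq])]

lemma cov0_zero_left {q : S → ℝ} (g : S → ℝ) : cov0 q (fun _ => 0) g = 0 := by
  simp [cov0, expec]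

lemma cov0_center {q : S → ℝ} (h1 : ∑ s, q s = 1) (f g : S → ℝ) :
    cov0 q f g = expec q (fun s => (f s - expec q f) * (g s - expec q g)) := by
  have expand : ∀ (A B : ℝ), expec q (fun s => (f s - A) * (g s - B)) =
      expec q (fun s => f s * g s) - A * expec q g - B * expec q f + A * B * (∑ s, q s) := by
    intro A B
    unfold expec
    rw [Finset.mul_sum, Finset.mul_sum, Finset.mul_sum, ← Finset.sum_sub_distrib,
      ← Finset.sum_sub_distrib, ← Finset.sum_add_distrib]
    exact Finset.sum_congr rfl fun s _ => by ring
  rw [expand, h1]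
  unfold cov0
  ring

lemma var0_nonneg {q : S → ℝ} (hq0 : ∀ s, 0 ≤ q s) (h1 : ∑ s, q s = 1) (f : S → ℝ) :
    0 ≤ var0 q f := by
  rw [var0, cov0_center h1]
  exact Finset.sum_nonneg fun s _ => mul_nonneg (hq0 s) (mul_self_nonneg _)

lemma sq_sum_mul_le {q a b : S → ℝ} (hq0 : ∀ s, 0 ≤ q s) :
    (∑ s, q s * (a s * b s)) ^ 2 ≤ (∑ s, q s * (a s * a s)) * (∑ s, q s * (b s * b s)) := by
  have e1 : ∀ s : S, q s * (a s * b s) =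
      (Real.sqrt (q s) * a s) * (Real.sqrt (q s) * b s) := fun s => by
    rw [mul_mul_mul_comm, Real.mul_self_sqrt (hq0 s)]
  have e2 : ∀ (c : S → ℝ) (s : S), q s * (c s * c s) = (Real.sqrt (q s) * c s) ^ 2 :=
    fun c s => by rw [mul_pow, Real.sq_sqrt (hq0 s), sq]
  calc (∑ s, q s * (a s * b s)) ^ 2
      = (∑ s, (Real.sqrt (q s) * a s) * (Real.sqrt (q s) * b s)) ^ 2 := by
        rw [Finset.sum_congr rfl fun s _ => e1 s]
    _ ≤ (∑ s, (Real.sqrt (q s) * a s) ^ 2) * (∑ s, (Real.sqrt (q s) * b s) ^ 2) :=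
        Finset.sum_mul_sq_le_sq_mul_sq Finset.univ _ _
    _ = (∑ s, q s * (a s * a s)) * (∑ s, q s * (b s * b s)) := by
        rw [Finset.sum_congr rfl fun s _ => e2 a s, Finset.sum_congr rfl fun s _ => e2 b s]

lemma cov0_sq_le {q : S → ℝ} (hq0 : ∀ s, 0 ≤ q s) (h1 : ∑ s, q s = 1) (f g : S → ℝ) :
    cov0 q f g ^ 2 ≤ var0 q f * var0 q g := by
  rw [cov0_center h1 f g, var0, var0, cov0_center h1 f f, cov0_center h1 g g]
  exact sq_sum_mul_le hq0

lemma le_sqrt_mul {x a b : ℝ} (h : x ^ 2 ≤ a * b) (ha : 0 ≤ a) :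
    x ≤ Real.sqrt a * Real.sqrt b := by
  calc x ≤ |x| := le_abs_self x
    _ = Real.sqrt (x ^ 2) := (Real.sqrt_sq_eq_abs x).symm
    _ ≤ Real.sqrt (a * b) := Real.sqrt_le_sqrt h
    _ = Real.sqrt a * Real.sqrt b := Real.sqrt_mul ha b

lemma cov0_le_sqrt {q : S → ℝ} (hq0 : ∀ s, 0 ≤ q s) (h1 : ∑ s, q s = 1) (f g : S → ℝ) :
    cov0 q f g ≤ Real.sqrt (var0 q f) * Real.sqrt (var0 q g) :=
  le_sqrt_mul (cov0_sq_le hq0 h1 f g) (var0_nonneg hq0 h1 f)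

lemma sqrt_mul_add_sqrt_mul_le {s s' v v' : ℝ} (hs : 0 ≤ s) (hs' : 0 ≤ s') (hv : 0 ≤ v)
    (hv' : 0 ≤ v') :
    Real.sqrt s * Real.sqrt s' + Real.sqrt v * Real.sqrt v' ≤
      Real.sqrt (s + v) * Real.sqrt (s' + v') := by
  have h2 : (Real.sqrt s * Real.sqrt s' + Real.sqrt v * Real.sqrt v') ^ 2 ≤
      (s + v) * (s' + v') := by
    nlinarith [sq_nonneg (Real.sqrt s * Real.sqrt v' - Real.sqrt v * Real.sqrt s'),
      Real.sq_sqrt hs, Real.sq_sqrt hs', Real.sq_sqrt hv, Real.sq_sqrt hv',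
      Real.sqrt_nonneg s, Real.sqrt_nonneg s', Real.sqrt_nonneg v, Real.sqrt_nonneg v',
      mul_nonneg (mul_nonneg (Real.sqrt_nonneg s) (Real.sqrt_nonneg s'))
        (mul_nonneg (Real.sqrt_nonneg v) (Real.sqrt_nonneg v'))]
  exact le_sqrt_mul h2 (by linarith)

lemma weighted_cs_s10 {w a b : S → ℝ} (hw : ∀ s, 0 ≤ w s) (ha : ∀ s, 0 ≤ a s) (hb : ∀ s, 0 ≤ b s) :
    ∑ s, w s * (Real.sqrt (a s) * Real.sqrt (b s)) ≤
      Real.sqrt (∑ s, w s * a s) * Real.sqrt (∑ s, w s * b s) := by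
  have e : ∀ s : S, w s * (Real.sqrt (a s) * Real.sqrt (b s)) =
      Real.sqrt (w s * a s) * Real.sqrt (w s * b s) := by
    intro s
    rw [Real.sqrt_mul (hw s), Real.sqrt_mul (hw s), mul_mul_mul_comm,
      Real.mul_self_sqrt (hw s)]
  rw [Finset.sum_congr rfl fun s _ => e s]
  exact Real.sum_sqrt_mul_sqrt_le Finset.univ (fun s => mul_nonneg (hw s) (ha s))
    (fun s => mul_nonneg (hw s) (hb s))

lemma expec_marg {q : S → ℝ} (Z : S → T) (φ : T → ℝ) :
    expec (marg q Z) φ = expec q (fun s => φ (Z s)) := by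
  unfold expec marg
  simp_rw [Finset.sum_mul, ite_mul, zero_mul]
  rw [Finset.sum_comm]
  refine Finset.sum_congr rfl fun s _ => ?_
  simp [Finset.sum_ite_eq]

lemma cov0_marg {q : S → ℝ} (Z : S → T) (φ ψ : T → ℝ) :
    cov0 (marg q Z) φ ψ = cov0 q (fun s => φ (Z s)) (fun s => ψ (Z s)) := by
  unfold cov0
  rw [expec_marg Z (fun t => φ t * ψ t), expec_marg Z φ, expec_marg Z ψ]

lemma var0_marg {q : S → ℝ} (Z : S → T) (φ : T → ℝ) :
    var0 (marg q Z) φ = var0 q (fun s => φ (Z s)) := by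
  rw [var0, var0, cov0_marg]

lemma marg_nonneg_s10 {q : S → ℝ} (hq0 : ∀ s, 0 ≤ q s) (Z : S → T) (t : T) :
    0 ≤ marg q Z t :=
  Finset.sum_nonneg fun s _ => by by_cases h : Z s = t <;> simp [h, hq0 s]

lemma isPMF_marg {q : S → ℝ} (hq : IsPMF q) (Z : S → T) : IsPMF (marg q Z) := by
  refine ⟨marg_nonneg_s10 hq.1 Z, ?_⟩
  have := expec_marg (q := q) Z (fun _ => (1 : ℝ))
  unfold expec at this
  simp only [mul_one] at this
  rw [this, hq.2]

end Aux
section Aux2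

open Finset

variable {Ω' 𝒰 : Type} [Fintype Ω'] [Fintype 𝒰]

/-- The conditional pmf given `U = u`. -/
def pcond (p : Ω' → ℝ) (U : Ω' → 𝒰) (u : 𝒰) : Ω' → ℝ :=
  fun ω => if U ω = u then p ω / marg p U u else 0

lemma p_eq_zero_of_marg_eq_zero {p : Ω' → ℝ} (hp0 : ∀ ω, 0 ≤ p ω) {U : Ω' → 𝒰} {u : 𝒰}
    (hM : marg p U u = 0) {ω : Ω'} (h : U ω = u) : p ω = 0 := by
  have := (Finset.sum_eq_zero_iff_of_nonneg
    (fun ω' _ => by by_cases h' : U ω' = u <;> simp [h', hp0 ω'])).1 hM ω (Finset.mem_univ ω)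
  simpa [h] using this

lemma pcond_nonneg {p : Ω' → ℝ} (hp0 : ∀ ω, 0 ≤ p ω) (U : Ω' → 𝒰) (u : 𝒰) (ω : Ω') :
    0 ≤ pcond p U u ω := by
  unfold pcond
  by_cases h : U ω = u
  · simp only [h, if_true]
    exact div_nonneg (hp0 ω) (marg_nonneg_s10 hp0 U u)
  · simp [h]

lemma pcond_support {p : Ω' → ℝ} {U : Ω' → 𝒰} {u : 𝒰} {ω : Ω'}
    (h : pcond p U u ω ≠ 0) : U ω = u := by
  by_contra hc
  exact h (by simp [pcond, hc])

lemma sum_pcond {p : Ω' → ℝ} {U : Ω' → 𝒰} {u : 𝒰} (hM : marg p U u ≠ 0) :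
    ∑ ω, pcond p U u ω = 1 := by
  unfold pcond
  have e : ∀ ω, (if U ω = u then p ω / marg p U u else 0) =
      (if U ω = u then p ω else 0) / marg p U u := by
    intro ω; split_ifs <;> simp
  rw [Finset.sum_congr rfl fun ω _ => e ω, ← Finset.sum_div]
  exact div_self hM

lemma isPMF_pcond {p : Ω' → ℝ} (hp0 : ∀ ω, 0 ≤ p ω) {U : Ω' → 𝒰} {u : 𝒰}
    (hM : marg p U u ≠ 0) : IsPMF (pcond p U u) :=
  ⟨pcond_nonneg hp0 U u, sum_pcond hM⟩

lemma cexp_eq_expec_pcond (p : Ω' → ℝ) (U : Ω' → 𝒰) (u : 𝒰) (f : Ω' → ℝ) :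
    cexp p U u f = expec (pcond p U u) f := by
  unfold cexp expec pcond
  rw [Finset.sum_div]
  refine Finset.sum_congr rfl fun ω _ => ?_
  by_cases h : U ω = u
  · simp only [h, if_true]
    ring
  · simp [h]

lemma fiber_sum {p : Ω' → ℝ} {U : Ω' → 𝒰} {u : 𝒰} (t : Ω' → ℝ) (hM : marg p U u ≠ 0) :
    ∑ ω, (if U ω = u then p ω * t ω else 0) = marg p U u * expec (pcond p U u) t := by
  unfold expec pcond
  rw [Finset.mul_sum]
  refine Finset.sum_congr rfl fun ω _ => ?_
  by_cases h : U ω = u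
  · simp only [h, if_true]
    field_simp
  · simp [h]

lemma ccov_decomp {p : Ω' → ℝ} (hp0 : ∀ ω, 0 ≤ p ω) (U : Ω' → 𝒰) (F G : Ω' → ℝ) :
    ccov p U F G = ∑ u, marg p U u * cov0 (pcond p U u) F G := by
  unfold ccov expec
  have step1 : ∀ ω : Ω', p ω * ((F ω - cexp p U (U ω) F) * (G ω - cexp p U (U ω) G)) =
      ∑ u, if U ω = u then p ω * ((F ω - cexp p U u F) * (G ω - cexp p U u G)) else 0 := by
    intro ω
    rw [Finset.sum_ite_eq]
    simp
  rw [Finset.sum_congr rfl fun ω _ => step1 ω, Finset.sum_comm]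
  refine Finset.sum_congr rfl fun u _ => ?_
  by_cases hM : marg p U u = 0
  · rw [hM, zero_mul]
    refine Finset.sum_eq_zero fun ω _ => ?_
    by_cases h : U ω = u
    · simp [h, p_eq_zero_of_marg_eq_zero hp0 hM h]
    · simp [h]
  · rw [cov0_center (sum_pcond hM),
      ← fiber_sum (fun ω => (F ω - expec (pcond p U u) F) * (G ω - expec (pcond p U u) G)) hM]
    exact Finset.sum_congr rfl fun ω _ => by
      rw [cexp_eq_expec_pcond, cexp_eq_expec_pcond]

lemma cvar_decomp {p : Ω' → ℝ} (hp0 : ∀ ω, 0 ≤ p ω) (U : Ω' → 𝒰) (F : Ω' → ℝ) :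
    cvar p U F = ∑ u, marg p U u * var0 (pcond p U u) F :=
  ccov_decomp hp0 U F F

lemma cvar_nonneg_s10 {p : Ω' → ℝ} (hp0 : ∀ ω, 0 ≤ p ω) (U : Ω' → 𝒰) (F : Ω' → ℝ) :
    0 ≤ cvar p U F := by
  unfold cvar ccov expec
  exact Finset.sum_nonneg fun ω _ => mul_nonneg (hp0 ω) (mul_self_nonneg _)

lemma ccov_sq_le_s10 {p : Ω' → ℝ} (hp0 : ∀ ω, 0 ≤ p ω) (U : Ω' → 𝒰) (F G : Ω' → ℝ) :
    ccov p U F G ^ 2 ≤ cvar p U F * cvar p U G :=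
  sq_sum_mul_le hp0

lemma ccorr_le_one_s10 {p : Ω' → ℝ} (hp0 : ∀ ω, 0 ≤ p ω) (U : Ω' → 𝒰) (F G : Ω' → ℝ) :
    ccorr p U F G ≤ 1 := by
  unfold ccorr
  split_ifs with h
  · have hF : 0 < cvar p U F := by
      rcases mul_pos_iff.1 h with ⟨h1, _⟩ | ⟨h1, _⟩
      · exact h1
      · exact absurd h1 (not_lt.2 (cvar_nonneg_s10 hp0 U F))
    have hG : 0 < cvar p U G := by
      rcases mul_pos_iff.1 h with ⟨_, h2⟩ | ⟨_, h2⟩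
      · exact h2
      · exact absurd h2 (not_lt.2 (cvar_nonneg_s10 hp0 U G))
    rw [div_le_one (mul_pos (Real.sqrt_pos.2 hF) (Real.sqrt_pos.2 hG))]
    exact le_sqrt_mul (ccov_sq_le_s10 hp0 U F G) hF.le
  · exact zero_le_one

end Aux2
section Aux3

open Finset

variable {Ω' 𝒰 𝒳' 𝒴' : Type} [Fintype Ω'] [Fintype 𝒰]

lemma ccorr_le_maxCorr {p : Ω' → ℝ} (hp0 : ∀ ω, 0 ≤ p ω) (U : Ω' → 𝒰)
    (X : Ω' → 𝒳') (Y : Ω' → 𝒴') (f : 𝒳' × 𝒰 → ℝ) (g : 𝒴' × 𝒰 → ℝ) :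
    ccorr p U (fun ω => f (X ω, U ω)) (fun ω => g (Y ω, U ω)) ≤ maxCorr p U X Y := by
  unfold maxCorr
  have bdd1 : ∀ f' : 𝒳' × 𝒰 → ℝ, BddAbove (Set.range fun g' : 𝒴' × 𝒰 → ℝ =>
      ccorr p U (fun ω => f' (X ω, U ω)) fun ω => g' (Y ω, U ω)) := fun f' =>
    ⟨1, by rintro _ ⟨g', rfl⟩; exact ccorr_le_one_s10 hp0 U _ _⟩
  have bdd2 : BddAbove (Set.range fun f' : 𝒳' × 𝒰 → ℝ =>
      ⨆ g' : 𝒴' × 𝒰 → ℝ, ccorr p U (fun ω => f' (X ω, U ω)) fun ω => g' (Y ω, U ω)) :=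
    ⟨1, by rintro _ ⟨f', rfl⟩; exact ciSup_le fun g' => ccorr_le_one_s10 hp0 U _ _⟩
  calc ccorr p U (fun ω => f (X ω, U ω)) (fun ω => g (Y ω, U ω))
      ≤ ⨆ g' : 𝒴' × 𝒰 → ℝ, ccorr p U (fun ω => f (X ω, U ω)) fun ω => g' (Y ω, U ω) :=
        le_ciSup (bdd1 f) g
    _ ≤ ⨆ f' : 𝒳' × 𝒰 → ℝ, ⨆ g' : 𝒴' × 𝒰 → ℝ,
          ccorr p U (fun ω => f' (X ω, U ω)) fun ω => g' (Y ω, U ω) :=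
        le_ciSup bdd2 f

lemma maxCorr_nonneg {p : Ω' → ℝ} (hp0 : ∀ ω, 0 ≤ p ω) (U : Ω' → 𝒰)
    (X : Ω' → 𝒳') (Y : Ω' → 𝒴') : 0 ≤ maxCorr p U X Y := by
  have hc : cvar p U (fun _ : Ω' => (0 : ℝ)) = 0 := by
    unfold cvar ccov expec cexp
    simp
  have hzero : ccorr p U (fun _ : Ω' => (0 : ℝ)) (fun _ : Ω' => (0 : ℝ)) = 0 := by
    simp [ccorr, hc]
  have h := ccorr_le_maxCorr hp0 U X Y (fun _ => (0 : ℝ)) (fun _ => (0 : ℝ))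
  simpa [hzero] using h

lemma maxCorr_le {p : Ω' → ℝ} (U : Ω' → 𝒰) (X : Ω' → 𝒳') (Y : Ω' → 𝒴') {r : ℝ}
    (h : ∀ (f : 𝒳' × 𝒰 → ℝ) (g : 𝒴' × 𝒰 → ℝ),
      ccorr p U (fun ω => f (X ω, U ω)) (fun ω => g (Y ω, U ω)) ≤ r) :
    maxCorr p U X Y ≤ r :=
  ciSup_le fun f => ciSup_le fun g => h f g

lemma ccov_le_maxCorr_mul {p : Ω' → ℝ} (hp0 : ∀ ω, 0 ≤ p ω) (U : Ω' → 𝒰)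
    (X : Ω' → 𝒳') (Y : Ω' → 𝒴') (f : 𝒳' × 𝒰 → ℝ) (g : 𝒴' × 𝒰 → ℝ) :
    ccov p U (fun ω => f (X ω, U ω)) (fun ω => g (Y ω, U ω)) ≤
      maxCorr p U X Y * (Real.sqrt (cvar p U (fun ω => f (X ω, U ω))) *
        Real.sqrt (cvar p U (fun ω => g (Y ω, U ω)))) := by
  set F : Ω' → ℝ := fun ω => f (X ω, U ω) with hF
  set G : Ω' → ℝ := fun ω => g (Y ω, U ω) with hG
  by_cases h : 0 < cvar p U F * cvar p U G
  · have hFv : 0 < cvar p U F := by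
      rcases mul_pos_iff.1 h with ⟨h1, _⟩ | ⟨h1, _⟩
      · exact h1
      · exact absurd h1 (not_lt.2 (cvar_nonneg_s10 hp0 U F))
    have hGv : 0 < cvar p U G := by
      rcases mul_pos_iff.1 h with ⟨_, h2⟩ | ⟨_, h2⟩
      · exact h2
      · exact absurd h2 (not_lt.2 (cvar_nonneg_s10 hp0 U G))
    have hcorr := ccorr_le_maxCorr hp0 U X Y f g
    rw [← hF, ← hG] at hcorr
    unfold ccorr at hcorr
    rw [if_pos h] at hcorr
    have hpos : 0 < Real.sqrt (cvar p U F) * Real.sqrt (cvar p U G) :=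
      mul_pos (Real.sqrt_pos.2 hFv) (Real.sqrt_pos.2 hGv)
    calc ccov p U F G = ccov p U F G / (Real.sqrt (cvar p U F) * Real.sqrt (cvar p U G)) *
          (Real.sqrt (cvar p U F) * Real.sqrt (cvar p U G)) := by field_simp
      _ ≤ maxCorr p U X Y * (Real.sqrt (cvar p U F) * Real.sqrt (cvar p U G)) :=
          mul_le_mul_of_nonneg_right hcorr hpos.le
  · have h0 : cvar p U F * cvar p U G = 0 :=
      le_antisymm (not_lt.1 h) (mul_nonneg (cvar_nonneg_s10 hp0 U F) (cvar_nonneg_s10 hp0 U G))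
    have hsq : ccov p U F G ^ 2 = 0 :=
      le_antisymm (h0 ▸ ccov_sq_le_s10 hp0 U F G) (sq_nonneg _)
    have hccov : ccov p U F G = 0 := sq_eq_zero_iff.1 hsq
    rw [hccov]
    exact mul_nonneg (maxCorr_nonneg hp0 U X Y)
      (mul_nonneg (Real.sqrt_nonneg _) (Real.sqrt_nonneg _))

/-- Localized ccov identity for functions supported at `U = u`. -/
lemma ccov_localize {p : Ω' → ℝ} (hp0 : ∀ ω, 0 ≤ p ω) (U : Ω' → 𝒰) (u : 𝒰)
    (F G : Ω' → ℝ) :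
    ccov p U (fun ω => if U ω = u then F ω else 0) (fun ω => if U ω = u then G ω else 0) =
      marg p U u * cov0 (pcond p U u) F G := by
  rw [ccov_decomp hp0]
  rw [Finset.sum_eq_single u]
  · congr 1
    exact cov0_congr (fun ω hω => by simp [pcond_support hω])
      (fun ω hω => by simp [pcond_support hω])
  · intro v _ hvu
    rw [cov0_congr (f' := fun _ => (0 : ℝ)) (g' := fun _ => (0 : ℝ))
      (fun ω hω => by simp [pcond_support hω, hvu])
      (fun ω hω => by simp [pcond_support hω, hvu]), cov0_zero_left, mul_zero]
  · intro h
    exact absurd (Finset.mem_univ u) h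

/-- Local version of the maximal-correlation covariance bound. -/
lemma local_bnd {p : Ω' → ℝ} (hp0 : ∀ ω, 0 ≤ p ω) (U : Ω' → 𝒰) {u : 𝒰}
    (hM : 0 < marg p U u) (X : Ω' → 𝒳') (Y : Ω' → 𝒴') (φ : 𝒳' → ℝ) (ψ : 𝒴' → ℝ) :
    cov0 (pcond p U u) (fun ω => φ (X ω)) (fun ω => ψ (Y ω)) ≤
      maxCorr p U X Y * (Real.sqrt (var0 (pcond p U u) (fun ω => φ (X ω))) *
        Real.sqrt (var0 (pcond p U u) (fun ω => ψ (Y ω)))) := by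
  have key := ccov_le_maxCorr_mul hp0 U X Y
    (fun z : 𝒳' × 𝒰 => if z.2 = u then φ z.1 else 0)
    (fun z : 𝒴' × 𝒰 => if z.2 = u then ψ z.1 else 0)
  have eF : (fun ω => (fun z : 𝒳' × 𝒰 => if z.2 = u then φ z.1 else 0) (X ω, U ω)) =
      (fun ω => if U ω = u then φ (X ω) else 0) := rfl
  have eG : (fun ω => (fun z : 𝒴' × 𝒰 => if z.2 = u then ψ z.1 else 0) (Y ω, U ω)) =
      (fun ω => if U ω = u then ψ (Y ω) else 0) := rfl
  rw [eF, eG] at key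
  rw [ccov_localize hp0 U u] at key
  have ecv1 : cvar p U (fun ω => if U ω = u then φ (X ω) else 0) =
      marg p U u * var0 (pcond p U u) (fun ω => φ (X ω)) := by
    unfold cvar
    rw [ccov_localize hp0 U u]
    rfl
  have ecv2 : cvar p U (fun ω => if U ω = u then ψ (Y ω) else 0) =
      marg p U u * var0 (pcond p U u) (fun ω => ψ (Y ω)) := by
    unfold cvar
    rw [ccov_localize hp0 U u]
    rfl
  rw [ecv1, ecv2] at key
  have esqrt : Real.sqrt (marg p U u * var0 (pcond p U u) (fun ω => φ (X ω))) *
      Real.sqrt (marg p U u * var0 (pcond p U u) (fun ω => ψ (Y ω))) =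
      marg p U u * (Real.sqrt (var0 (pcond p U u) (fun ω => φ (X ω))) *
        Real.sqrt (var0 (pcond p U u) (fun ω => ψ (Y ω)))) := by
    rw [Real.sqrt_mul hM.le, Real.sqrt_mul hM.le, mul_mul_mul_comm,
      Real.mul_self_sqrt hM.le]
  rw [esqrt] at key
  have key2 := key.trans_eq (by ring :
    maxCorr p U X Y * (marg p U u * (Real.sqrt (var0 (pcond p U u) (fun ω => φ (X ω))) *
        Real.sqrt (var0 (pcond p U u) (fun ω => ψ (Y ω))))) =
    marg p U u * (maxCorr p U X Y * (Real.sqrt (var0 (pcond p U u) (fun ω => φ (X ω))) *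
        Real.sqrt (var0 (pcond p U u) (fun ω => ψ (Y ω))))))
  exact le_of_mul_le_mul_left key2 hM

end Aux3
section Aux4

open Finset

variable {A B C D : Type} [Fintype A] [Fintype B] [Fintype C] [Fintype D]

/-- The covariance bound property of a joint pmf on `A × B`. -/
def Bnd (q : A × B → ℝ) (R : ℝ) : Prop :=
  ∀ (φ : A → ℝ) (ψ : B → ℝ),
    cov0 q (fun s => φ s.1) (fun s => ψ s.2) ≤
      R * (Real.sqrt (var0 q fun s => φ s.1) * Real.sqrt (var0 q fun s => ψ s.2))

lemma expec_prod (q₁ : A × B → ℝ) (q₂ : C × D → ℝ) (h : A × B → C × D → ℝ) :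
    expec (fun s : (A × C) × (B × D) => q₁ (s.1.1, s.2.1) * q₂ (s.1.2, s.2.2))
        (fun s => h (s.1.1, s.2.1) (s.1.2, s.2.2)) =
      expec q₁ (fun ab => expec q₂ fun cd => h ab cd) := by
  unfold expec
  simp only [Fintype.sum_prod_type, Finset.mul_sum]
  refine Finset.sum_congr rfl fun a _ => ?_
  rw [Finset.sum_comm]
  exact Finset.sum_congr rfl fun b _ => Finset.sum_congr rfl fun c _ =>
    Finset.sum_congr rfl fun d _ => by ring

lemma isPMF_prod {q₁ : A × B → ℝ} {q₂ : C × D → ℝ} (h₁ : IsPMF q₁) (h₂ : IsPMF q₂) :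
    IsPMF (fun s : (A × C) × (B × D) => q₁ (s.1.1, s.2.1) * q₂ (s.1.2, s.2.2)) := by
  constructor
  · intro s
    exact mul_nonneg (h₁.1 _) (h₂.1 _)
  · have key := expec_prod q₁ q₂ (fun _ _ => (1 : ℝ))
    unfold expec at key
    simp only [mul_one] at key
    rw [key]
    rw [Finset.sum_congr rfl fun ab _ => by rw [h₂.2]]
    simpa using h₁.2

/-- Witsenhausen's two-factor tensorization step. -/
lemma W2 {q₁ : A × B → ℝ} {q₂ : C × D → ℝ} {R : ℝ} (h₁p : IsPMF q₁) (h₂p : IsPMF q₂)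
    (hR : 0 ≤ R) (h₁ : Bnd q₁ R) (h₂ : Bnd q₂ R) :
    Bnd (fun s : (A × C) × (B × D) => q₁ (s.1.1, s.2.1) * q₂ (s.1.2, s.2.2)) R := by
  intro φ ψ
  -- abbreviations
  have I1 : expec (fun s : (A × C) × (B × D) => q₁ (s.1.1, s.2.1) * q₂ (s.1.2, s.2.2))
      (fun s => φ s.1) = expec q₁ (fun ab => expec q₂ fun cd => φ (ab.1, cd.1)) := by
    have := expec_prod q₁ q₂ (fun ab cd => φ (ab.1, cd.1))
    simpa using this
  have I1' : expec (fun s : (A × C) × (B × D) => q₁ (s.1.1, s.2.1) * q₂ (s.1.2, s.2.2))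
      (fun s => ψ s.2) = expec q₁ (fun ab => expec q₂ fun cd => ψ (ab.2, cd.2)) := by
    have := expec_prod q₁ q₂ (fun ab cd => ψ (ab.2, cd.2))
    simpa using this
  have IFG : expec (fun s : (A × C) × (B × D) => q₁ (s.1.1, s.2.1) * q₂ (s.1.2, s.2.2))
      (fun s => φ s.1 * ψ s.2) =
      expec q₁ (fun ab => expec q₂ fun cd => φ (ab.1, cd.1) * ψ (ab.2, cd.2)) := by
    have := expec_prod q₁ q₂ (fun ab cd => φ (ab.1, cd.1) * ψ (ab.2, cd.2))
    simpa using this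
  have IFF : expec (fun s : (A × C) × (B × D) => q₁ (s.1.1, s.2.1) * q₂ (s.1.2, s.2.2))
      (fun s => φ s.1 * φ s.1) =
      expec q₁ (fun ab => expec q₂ fun cd => φ (ab.1, cd.1) * φ (ab.1, cd.1)) := by
    have := expec_prod q₁ q₂ (fun ab cd => φ (ab.1, cd.1) * φ (ab.1, cd.1))
    simpa using this
  have IGG : expec (fun s : (A × C) × (B × D) => q₁ (s.1.1, s.2.1) * q₂ (s.1.2, s.2.2))
      (fun s => ψ s.2 * ψ s.2) =
      expec q₁ (fun ab => expec q₂ fun cd => ψ (ab.2, cd.2) * ψ (ab.2, cd.2)) := by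
    have := expec_prod q₁ q₂ (fun ab cd => ψ (ab.2, cd.2) * ψ (ab.2, cd.2))
    simpa using this
  -- expectation additivity
  have expec_add : ∀ (q f g : A × B → ℝ),
      expec q (fun s => f s + g s) = expec q f + expec q g := by
    intro q f g
    unfold expec
    rw [← Finset.sum_add_distrib]
    exact Finset.sum_congr rfl fun s _ => by ring
  -- decomposition of covariance
  have I2 : cov0 (fun s : (A × C) × (B × D) => q₁ (s.1.1, s.2.1) * q₂ (s.1.2, s.2.2))
      (fun s => φ s.1) (fun s => ψ s.2) =
      expec q₁ (fun ab => cov0 q₂ (fun cd => φ (ab.1, cd.1)) (fun cd => ψ (ab.2, cd.2))) +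
      cov0 q₁ (fun ab => expec q₂ fun cd => φ (ab.1, cd.1))
        (fun ab => expec q₂ fun cd => ψ (ab.2, cd.2)) := by
    unfold cov0
    rw [IFG, I1, I1']
    have e : ∀ ab : A × B, (expec q₂ fun cd => φ (ab.1, cd.1) * ψ (ab.2, cd.2)) =
        (cov0 q₂ (fun cd => φ (ab.1, cd.1)) (fun cd => ψ (ab.2, cd.2)) +
          (expec q₂ fun cd => φ (ab.1, cd.1)) * (expec q₂ fun cd => ψ (ab.2, cd.2))) := by
      intro ab
      unfold cov0
      ring
    rw [expec_congr (fun ab _ => e ab), expec_add]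
    unfold cov0
    ring
  have I3 : var0 (fun s : (A × C) × (B × D) => q₁ (s.1.1, s.2.1) * q₂ (s.1.2, s.2.2))
      (fun s => φ s.1) =
      expec q₁ (fun ab => var0 q₂ (fun cd => φ (ab.1, cd.1))) +
      var0 q₁ (fun ab => expec q₂ fun cd => φ (ab.1, cd.1)) := by
    unfold var0 cov0
    rw [IFF, I1]
    have e : ∀ ab : A × B, (expec q₂ fun cd => φ (ab.1, cd.1) * φ (ab.1, cd.1)) =
        (var0 q₂ (fun cd => φ (ab.1, cd.1)) +
          (expec q₂ fun cd => φ (ab.1, cd.1)) * (expec q₂ fun cd => φ (ab.1, cd.1))) := by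
      intro ab
      unfold var0 cov0
      ring
    rw [expec_congr (fun ab _ => e ab), expec_add]
    unfold var0 cov0
    ring
  have I3' : var0 (fun s : (A × C) × (B × D) => q₁ (s.1.1, s.2.1) * q₂ (s.1.2, s.2.2))
      (fun s => ψ s.2) =
      expec q₁ (fun ab => var0 q₂ (fun cd => ψ (ab.2, cd.2))) +
      var0 q₁ (fun ab => expec q₂ fun cd => ψ (ab.2, cd.2)) := by
    unfold var0 cov0
    rw [IGG, I1']
    have e : ∀ ab : A × B, (expec q₂ fun cd => ψ (ab.2, cd.2) * ψ (ab.2, cd.2)) =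
        (var0 q₂ (fun cd => ψ (ab.2, cd.2)) +
          (expec q₂ fun cd => ψ (ab.2, cd.2)) * (expec q₂ fun cd => ψ (ab.2, cd.2))) := by
      intro ab
      unfold var0 cov0
      ring
    rw [expec_congr (fun ab _ => e ab), expec_add]
    unfold var0 cov0
    ring
  -- nonnegativity facts
  have hvf : ∀ a : A, 0 ≤ var0 q₂ (fun cd => φ (a, cd.1)) :=
    fun a => var0_nonneg h₂p.1 h₂p.2 _
  have hvg : ∀ b : B, 0 ≤ var0 q₂ (fun cd => ψ (b, cd.2)) :=
    fun b => var0_nonneg h₂p.1 h₂p.2 _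
  have hSf : 0 ≤ expec q₁ (fun ab => var0 q₂ (fun cd => φ (ab.1, cd.1))) :=
    Finset.sum_nonneg fun ab _ => mul_nonneg (h₁p.1 ab) (hvf ab.1)
  have hSg : 0 ≤ expec q₁ (fun ab => var0 q₂ (fun cd => ψ (ab.2, cd.2))) :=
    Finset.sum_nonneg fun ab _ => mul_nonneg (h₁p.1 ab) (hvg ab.2)
  have hVf : 0 ≤ var0 q₁ (fun ab => expec q₂ fun cd => φ (ab.1, cd.1)) :=
    var0_nonneg h₁p.1 h₁p.2 _
  have hVg : 0 ≤ var0 q₁ (fun ab => expec q₂ fun cd => ψ (ab.2, cd.2)) :=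
    var0_nonneg h₁p.1 h₁p.2 _
  -- bound on term 1
  have B1 : expec q₁ (fun ab => cov0 q₂ (fun cd => φ (ab.1, cd.1))
      (fun cd => ψ (ab.2, cd.2))) ≤
      R * (Real.sqrt (expec q₁ (fun ab => var0 q₂ (fun cd => φ (ab.1, cd.1)))) *
        Real.sqrt (expec q₁ (fun ab => var0 q₂ (fun cd => ψ (ab.2, cd.2))))) := by
    have step1 : expec q₁ (fun ab => cov0 q₂ (fun cd => φ (ab.1, cd.1))
        (fun cd => ψ (ab.2, cd.2))) ≤
        R * ∑ ab : A × B, q₁ ab * (Real.sqrt (var0 q₂ (fun cd => φ (ab.1, cd.1))) *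
          Real.sqrt (var0 q₂ (fun cd => ψ (ab.2, cd.2)))) := by
      unfold expec
      rw [Finset.mul_sum]
      refine Finset.sum_le_sum fun ab _ => ?_
      have hb := h₂ (fun c => φ (ab.1, c)) (fun d => ψ (ab.2, d))
      calc q₁ ab * cov0 q₂ (fun cd => φ (ab.1, cd.1)) (fun cd => ψ (ab.2, cd.2))
          ≤ q₁ ab * (R * (Real.sqrt (var0 q₂ (fun cd => φ (ab.1, cd.1))) *
            Real.sqrt (var0 q₂ (fun cd => ψ (ab.2, cd.2))))) :=
            mul_le_mul_of_nonneg_left hb (h₁p.1 ab)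
        _ = R * (q₁ ab * (Real.sqrt (var0 q₂ (fun cd => φ (ab.1, cd.1))) *
            Real.sqrt (var0 q₂ (fun cd => ψ (ab.2, cd.2))))) := by ring
    refine step1.trans ?_
    apply mul_le_mul_of_nonneg_left _ hR
    exact weighted_cs_s10 h₁p.1 (fun ab => hvf ab.1) (fun ab => hvg ab.2)
  -- bound on term 2
  have B2 : cov0 q₁ (fun ab => expec q₂ fun cd => φ (ab.1, cd.1))
      (fun ab => expec q₂ fun cd => ψ (ab.2, cd.2)) ≤
      R * (Real.sqrt (var0 q₁ (fun ab => expec q₂ fun cd => φ (ab.1, cd.1))) *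
        Real.sqrt (var0 q₁ (fun ab => expec q₂ fun cd => ψ (ab.2, cd.2)))) :=
    h₁ (fun a => expec q₂ fun cd => φ (a, cd.1)) (fun b => expec q₂ fun cd => ψ (b, cd.2))
  -- combine
  rw [I2, I3, I3']
  have final := sqrt_mul_add_sqrt_mul_le hSf hSg hVf hVg
  calc expec q₁ (fun ab => cov0 q₂ (fun cd => φ (ab.1, cd.1)) (fun cd => ψ (ab.2, cd.2))) +
      cov0 q₁ (fun ab => expec q₂ fun cd => φ (ab.1, cd.1))
        (fun ab => expec q₂ fun cd => ψ (ab.2, cd.2))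
      ≤ R * (Real.sqrt (expec q₁ (fun ab => var0 q₂ (fun cd => φ (ab.1, cd.1)))) *
          Real.sqrt (expec q₁ (fun ab => var0 q₂ (fun cd => ψ (ab.2, cd.2))))) +
        R * (Real.sqrt (var0 q₁ (fun ab => expec q₂ fun cd => φ (ab.1, cd.1))) *
          Real.sqrt (var0 q₁ (fun ab => expec q₂ fun cd => ψ (ab.2, cd.2)))) :=
        add_le_add B1 B2
    _ = R * (Real.sqrt (expec q₁ (fun ab => var0 q₂ (fun cd => φ (ab.1, cd.1)))) *
          Real.sqrt (expec q₁ (fun ab => var0 q₂ (fun cd => ψ (ab.2, cd.2)))) +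
        Real.sqrt (var0 q₁ (fun ab => expec q₂ fun cd => φ (ab.1, cd.1))) *
          Real.sqrt (var0 q₁ (fun ab => expec q₂ fun cd => ψ (ab.2, cd.2)))) := by ring
    _ ≤ R * (Real.sqrt (expec q₁ (fun ab => var0 q₂ (fun cd => φ (ab.1, cd.1))) +
          var0 q₁ (fun ab => expec q₂ fun cd => φ (ab.1, cd.1))) *
        Real.sqrt (expec q₁ (fun ab => var0 q₂ (fun cd => ψ (ab.2, cd.2))) +
          var0 q₁ (fun ab => expec q₂ fun cd => ψ (ab.2, cd.2)))) :=
        mul_le_mul_of_nonneg_left final hR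

end Aux4
section Aux5

open Finset

variable {S T A B A' B' : Type} [Fintype S] [Fintype T]
  [Fintype A] [Fintype B] [Fintype A'] [Fintype B']

lemma marg_equiv (E : S ≃ T) (q : S → ℝ) (t : T) : marg q (⇑E) t = q (E.symm t) := by
  unfold marg
  rw [Finset.sum_eq_single (E.symm t)]
  · simp
  · intro s _ hs
    rw [if_neg]
    intro he
    exact hs (by rw [← he]; simp)
  · intro h
    exact absurd (Finset.mem_univ _) h

lemma isPMF_equiv {q : S → ℝ} (hq : IsPMF q) (E : S ≃ T) :
    IsPMF (fun t => q (E.symm t)) := by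
  refine ⟨fun t => hq.1 _, ?_⟩
  rw [Equiv.sum_comp E.symm q, hq.2]

lemma Bnd_equiv (E : A ≃ A') (E' : B ≃ B') {q : A × B → ℝ} {R : ℝ} (h : Bnd q R) :
    Bnd (fun s : A' × B' => q (E.symm s.1, E'.symm s.2)) R := by
  intro φ ψ
  have hq' : (fun s : A' × B' => q (E.symm s.1, E'.symm s.2)) =
      marg q (⇑(E.prodCongr E')) := by
    funext s
    rw [marg_equiv (E.prodCongr E') q s]
    rfl
  rw [hq', cov0_marg, var0_marg, var0_marg]
  have e1 : (fun s : A × B => φ ((E.prodCongr E') s).1) = (fun s : A × B => φ (E s.1)) := rfl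
  have e2 : (fun s : A × B => ψ ((E.prodCongr E') s).2) = (fun s : A × B => ψ (E' s.2)) := rfl
  rw [e1, e2]
  exact h (fun a => φ (E a)) (fun b => ψ (E' b))

/-- Witsenhausen tensorization for an `n`-fold product. -/
lemma Wn : ∀ (n : ℕ) (𝒳 𝒴 : Fin n → Type) (iX : ∀ i, Fintype (𝒳 i))
    (iY : ∀ i, Fintype (𝒴 i)) (q : ∀ i, 𝒳 i × 𝒴 i → ℝ) (_ : ∀ i, IsPMF (q i))
    (R : ℝ) (_ : 0 ≤ R) (_ : ∀ i, Bnd (q i) R),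
    IsPMF (fun s : (∀ i, 𝒳 i) × (∀ i, 𝒴 i) => ∏ i, q i (s.1 i, s.2 i)) ∧
      Bnd (fun s : (∀ i, 𝒳 i) × (∀ i, 𝒴 i) => ∏ i, q i (s.1 i, s.2 i)) R := by
  intro n
  induction n with
  | zero =>
    intro 𝒳 𝒴 iX iY q hq R hR hB
    haveI hu : Unique ((∀ i : Fin 0, 𝒳 i) × (∀ i : Fin 0, 𝒴 i)) :=
      ⟨⟨(fun i => i.elim0, fun i => i.elim0)⟩, fun s => by
        refine Prod.ext ?_ ?_ <;> funext i <;> exact i.elim0⟩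
    constructor
    · constructor
      · intro s
        simp
      · simp
    · intro φ ψ
      have h0 : cov0 (fun s : (∀ i, 𝒳 i) × (∀ i, 𝒴 i) => ∏ i, q i (s.1 i, s.2 i))
          (fun s => φ s.1) (fun s => ψ s.2) = 0 := by
        unfold cov0 expec
        simp only [Finset.univ_eq_empty, Finset.prod_empty, one_mul]
        rw [Fintype.sum_unique (ι := (∀ i, 𝒳 i) × (∀ i, 𝒴 i))]
        rw [Fintype.sum_unique (ι := (∀ i, 𝒳 i) × (∀ i, 𝒴 i))]
        rw [Fintype.sum_unique (ι := (∀ i, 𝒳 i) × (∀ i, 𝒴 i))]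
        ring
      rw [h0]
      exact mul_nonneg hR (mul_nonneg (Real.sqrt_nonneg _) (Real.sqrt_nonneg _))
  | succ n ih =>
    intro 𝒳 𝒴 iX iY q hq R hR hB
    letI := iX
    letI := iY
    obtain ⟨hpmfT, hBT⟩ := ih (fun i => 𝒳 i.succ) (fun i => 𝒴 i.succ) (fun i => iX i.succ)
      (fun i => iY i.succ) (fun i => q i.succ) (fun i => hq i.succ) R hR (fun i => hB i.succ)
    have hpmf2 := isPMF_prod (hq 0) hpmfT
    have hB2 := W2 (hq 0) hpmfT hR (hB 0) hBT
    set E := Fin.consEquiv 𝒳 with hE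
    set E' := Fin.consEquiv 𝒴 with hE'
    have hfun : (fun s : (∀ i, 𝒳 i) × (∀ i, 𝒴 i) => ∏ i, q i (s.1 i, s.2 i)) =
        (fun s : (∀ i, 𝒳 i) × (∀ i, 𝒴 i) =>
          (fun t : (𝒳 0 × ∀ i : Fin n, 𝒳 i.succ) × (𝒴 0 × ∀ i : Fin n, 𝒴 i.succ) =>
            q 0 (t.1.1, t.2.1) * ∏ i, q i.succ (t.1.2 i, t.2.2 i))
            (E.symm s.1, E'.symm s.2)) := by
      funext s
      simp only [Fin.consEquiv_symm_apply]
      rw [Fin.prod_univ_succ (fun i => q i (s.1 i, s.2 i))]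
      rfl
    constructor
    · rw [hfun]
      exact isPMF_equiv hpmf2 (E.prodCongr E')
    · rw [hfun]
      exact Bnd_equiv E E' hB2

end Aux5
section Aux6

open Finset

variable {Ω' 𝒰 : Type} [Fintype Ω'] [Fintype 𝒰]

lemma marg_pcond {p : Ω' → ℝ} {U : Ω' → 𝒰} {u : 𝒰} {T : Type} (W : Ω' → T) (t : T) :
    marg (pcond p U u) W t = marg p (fun ω => (W ω, U ω)) (t, u) / marg p U u := by
  unfold pcond marg
  rw [Finset.sum_div]
  refine Finset.sum_congr rfl fun ω _ => ?_
  by_cases h1 : W ω = t <;> by_cases h2 : U ω = u <;> simp [h1, h2, Prod.ext_iff]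

lemma var0_pcond_nonneg {p : Ω' → ℝ} (hp0 : ∀ ω, 0 ≤ p ω) (U : Ω' → 𝒰) (u : 𝒰)
    (H : Ω' → ℝ) : 0 ≤ var0 (pcond p U u) H := by
  by_cases hM : marg p U u = 0
  · have hz : pcond p U u = fun _ => 0 := funext fun ω => by simp [pcond, hM]
    rw [hz]
    unfold var0 cov0 expec
    simp
  · exact var0_nonneg (pcond_nonneg hp0 U u) (sum_pcond hM) H

/-- The key tensorized covariance bound, for finite alphabet families. -/
lemma key_bound {n : ℕ} (hn : 0 < n) {𝒳 𝒴 : Fin n → Type}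
    [iX : ∀ i, Fintype (𝒳 i)] [iY : ∀ i, Fintype (𝒴 i)]
    (p : Ω' → ℝ) (hp0 : ∀ ω, 0 ≤ p ω) (X : ∀ i, Ω' → 𝒳 i) (Y : ∀ i, Ω' → 𝒴 i)
    (U : Ω' → 𝒰) {R : ℝ} (hR0 : 0 ≤ R) (hRi : ∀ i, maxCorr p U (X i) (Y i) ≤ R)
    (hindep : ∀ u : 𝒰, 0 < marg p U u →
      ∀ (xs : ∀ i, 𝒳 i) (ys : ∀ i, 𝒴 i),
        marg p (fun ω => ((fun i => X i ω), (fun i => Y i ω), U ω)) (xs, ys, u) *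
            (marg p U u) ^ (n - 1) =
          ∏ i, marg p (fun ω => (X i ω, Y i ω, U ω)) (xs i, ys i, u))
    (f : (∀ i, 𝒳 i) × 𝒰 → ℝ) (g : (∀ i, 𝒴 i) × 𝒰 → ℝ) :
    ccov p U (fun ω => f ((fun i => X i ω), U ω)) (fun ω => g ((fun i => Y i ω), U ω)) ≤
      R * (Real.sqrt (cvar p U (fun ω => f ((fun i => X i ω), U ω))) *
        Real.sqrt (cvar p U (fun ω => g ((fun i => Y i ω), U ω)))) := by
  rw [ccov_decomp hp0, cvar_decomp hp0, cvar_decomp hp0]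
  have per_u : ∀ u : 𝒰,
      marg p U u * cov0 (pcond p U u) (fun ω => f ((fun i => X i ω), U ω))
        (fun ω => g ((fun i => Y i ω), U ω)) ≤
      marg p U u * (R *
        (Real.sqrt (var0 (pcond p U u) (fun ω => f ((fun i => X i ω), U ω))) *
         Real.sqrt (var0 (pcond p U u) (fun ω => g ((fun i => Y i ω), U ω))))) := by
    intro u
    rcases eq_or_lt_of_le (marg_nonneg_s10 hp0 U u) with hM | hM
    · rw [← hM, zero_mul, zero_mul]
    · refine mul_le_mul_of_nonneg_left ?_ (marg_nonneg_s10 hp0 U u)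
      -- core claim at u
      have hpc : IsPMF (pcond p U u) := isPMF_pcond hp0 hM.ne'
      have hQi : ∀ i, IsPMF (marg (pcond p U u) (fun ω => (X i ω, Y i ω))) :=
        fun i => isPMF_marg hpc _
      have hBi : ∀ i, Bnd (marg (pcond p U u) (fun ω => (X i ω, Y i ω))) R := by
        intro i φ ψ
        rw [cov0_marg, var0_marg, var0_marg]
        refine le_trans (local_bnd hp0 U hM (X i) (Y i) φ ψ) ?_
        exact mul_le_mul_of_nonneg_right (hRi i)
          (mul_nonneg (Real.sqrt_nonneg _) (Real.sqrt_nonneg _))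
      obtain ⟨hQpmf, hQbnd⟩ := Wn n 𝒳 𝒴 iX iY
        (fun i => marg (pcond p U u) (fun ω => (X i ω, Y i ω))) hQi R hR0 hBi
      have hprod : (fun s : (∀ i, 𝒳 i) × (∀ i, 𝒴 i) =>
          ∏ i, marg (pcond p U u) (fun ω => (X i ω, Y i ω)) (s.1 i, s.2 i)) =
          marg (pcond p U u) (fun ω => ((fun i => X i ω), (fun i => Y i ω))) := by
        funext s
        have hs1 : ∀ i : Fin n, marg (pcond p U u) (fun ω => (X i ω, Y i ω)) (s.1 i, s.2 i) =
            marg p (fun ω => (X i ω, Y i ω, U ω)) (s.1 i, s.2 i, u) / marg p U u := by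
          intro i
          rw [marg_pcond]
          congr 1
          refine Finset.sum_congr rfl fun ω _ => ?_
          simp only [Prod.ext_iff, and_assoc]
        have hs2 : marg (pcond p U u) (fun ω => ((fun i => X i ω), (fun i => Y i ω))) s =
            marg p (fun ω => ((fun i => X i ω), (fun i => Y i ω), U ω)) (s.1, s.2, u) /
              marg p U u := by
          rw [marg_pcond]
          congr 1
          refine Finset.sum_congr rfl fun ω _ => ?_
          simp only [Prod.ext_iff, and_assoc]
        rw [Finset.prod_congr rfl fun i _ => hs1 i, hs2]
        rw [Finset.prod_div_distrib, Finset.prod_const, Finset.card_univ, Fintype.card_fin]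
        rw [← hindep u hM s.1 s.2]
        have hMn : (marg p U u) ^ n = marg p U u * (marg p U u) ^ (n - 1) := by
          conv_lhs => rw [← Nat.succ_pred_eq_of_pos hn]
          rw [pow_succ', Nat.pred_eq_sub_one]
        rw [hMn]
        rw [mul_div_mul_right _ _ (pow_ne_zero _ hM.ne')]
      rw [hprod] at hQbnd
      have hF := hQbnd (fun x => f (x, u)) (fun y => g (y, u))
      rw [cov0_marg, var0_marg, var0_marg] at hF
      have hcong : cov0 (pcond p U u) (fun ω => f ((fun i => X i ω), U ω))
          (fun ω => g ((fun i => Y i ω), U ω)) =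
          cov0 (pcond p U u) (fun ω => f ((fun i => X i ω), u))
            (fun ω => g ((fun i => Y i ω), u)) :=
        cov0_congr (fun ω hω => by rw [pcond_support hω])
          (fun ω hω => by rw [pcond_support hω])
      have hvF : var0 (pcond p U u) (fun ω => f ((fun i => X i ω), U ω)) =
          var0 (pcond p U u) (fun ω => f ((fun i => X i ω), u)) :=
        cov0_congr (fun ω hω => by rw [pcond_support hω])
          (fun ω hω => by rw [pcond_support hω])
      have hvG : var0 (pcond p U u) (fun ω => g ((fun i => Y i ω), U ω)) =
          var0 (pcond p U u) (fun ω => g ((fun i => Y i ω), u)) :=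
        cov0_congr (fun ω hω => by rw [pcond_support hω])
          (fun ω hω => by rw [pcond_support hω])
      rw [hcong, hvF, hvG]
      exact hF
  calc ∑ u, marg p U u * cov0 (pcond p U u) (fun ω => f ((fun i => X i ω), U ω))
        (fun ω => g ((fun i => Y i ω), U ω))
      ≤ ∑ u, marg p U u * (R *
          (Real.sqrt (var0 (pcond p U u) (fun ω => f ((fun i => X i ω), U ω))) *
           Real.sqrt (var0 (pcond p U u) (fun ω => g ((fun i => Y i ω), U ω))))) :=
        Finset.sum_le_sum fun u _ => per_u u
    _ = R * ∑ u, marg p U u *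
          (Real.sqrt (var0 (pcond p U u) (fun ω => f ((fun i => X i ω), U ω))) *
           Real.sqrt (var0 (pcond p U u) (fun ω => g ((fun i => Y i ω), U ω)))) := by
        rw [Finset.mul_sum]
        exact Finset.sum_congr rfl fun u _ => by ring
    _ ≤ R * (Real.sqrt (∑ u, marg p U u *
            var0 (pcond p U u) (fun ω => f ((fun i => X i ω), U ω))) *
          Real.sqrt (∑ u, marg p U u *
            var0 (pcond p U u) (fun ω => g ((fun i => Y i ω), U ω)))) :=
        mul_le_mul_of_nonneg_left (weighted_cs_s10 (marg_nonneg_s10 hp0 U)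
          (fun u => var0_pcond_nonneg hp0 U u _) (fun u => var0_pcond_nonneg hp0 U u _)) hR0

end Aux6
section Aux6b
variable {Ω' 𝒰 : Type} [Fintype Ω'] [Fintype 𝒰]

lemma maxCorr_range_le {𝒳' 𝒴' : Type} {p : Ω' → ℝ} (hp0 : ∀ ω, 0 ≤ p ω) (U : Ω' → 𝒰)
    (X : Ω' → 𝒳') (Y : Ω' → 𝒴') :
    maxCorr p U (fun ω => (⟨X ω, Set.mem_range_self ω⟩ : Set.range X))
      (fun ω => (⟨Y ω, Set.mem_range_self ω⟩ : Set.range Y)) ≤ maxCorr p U X Y := by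
  apply maxCorr_le
  intro f' g'
  have ef : (fun ω => f' ((⟨X ω, Set.mem_range_self ω⟩ : Set.range X), U ω)) =
      fun ω => (fun z : 𝒳' × 𝒰 =>
        if h : z.1 ∈ Set.range X then f' (⟨z.1, h⟩, z.2) else 0) (X ω, U ω) := by
    funext ω
    show f' (⟨X ω, Set.mem_range_self ω⟩, U ω) =
      if h : X ω ∈ Set.range X then f' (⟨X ω, h⟩, U ω) else 0
    rw [dif_pos (show X ω ∈ Set.range X from ⟨ω, rfl⟩)]
  have eg : (fun ω => g' ((⟨Y ω, Set.mem_range_self ω⟩ : Set.range Y), U ω)) =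
      fun ω => (fun z : 𝒴' × 𝒰 =>
        if h : z.1 ∈ Set.range Y then g' (⟨z.1, h⟩, z.2) else 0) (Y ω, U ω) := by
    funext ω
    show g' (⟨Y ω, Set.mem_range_self ω⟩, U ω) =
      if h : Y ω ∈ Set.range Y then g' (⟨Y ω, h⟩, U ω) else 0
    rw [dif_pos (show Y ω ∈ Set.range Y from ⟨ω, rfl⟩)]
  have h := ccorr_le_maxCorr hp0 U X Y
    (fun z : 𝒳' × 𝒰 => if h : z.1 ∈ Set.range X then f' (⟨z.1, h⟩, z.2) else 0)
    (fun z : 𝒴' × 𝒰 => if h : z.1 ∈ Set.range Y then g' (⟨z.1, h⟩, z.2) else 0)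
  rw [← ef, ← eg] at h
  exact h

end Aux6b
set_option maxHeartbeats 2000000 in
/-- Tensorization. If, conditionally on `U`, the pairs
`(X₁,Y₁), …, (Xₙ,Yₙ)` are mutually independent, then
`ρ_m(X^n; Y^n | U) = max_{1 ≤ i ≤ n} ρ_m(X_i; Y_i | U)`. The conditional independence is
expressed (multiplying through by `P_U(u)^{n-1}`) as
`P(X^n = xs, Y^n = ys, U = u)·P_U(u)^{n-1} = ∏ i, P(X_i = xs i, Y_i = ys i, U = u)`. -/
theorem maxCorr_tensorization {Ω 𝒰 : Type} [Fintype Ω] [Fintype 𝒰] {n : ℕ} (hn : 0 < n)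
    {𝒳 𝒴 : Fin n → Type}
    (p : Ω → ℝ) (hp : IsPMF p) (X : ∀ i, Ω → 𝒳 i) (Y : ∀ i, Ω → 𝒴 i) (U : Ω → 𝒰)
    (hindep : ∀ u : 𝒰, 0 < marg p U u →
      ∀ (xs : ∀ i, 𝒳 i) (ys : ∀ i, 𝒴 i),
        marg p (fun ω => ((fun i => X i ω), (fun i => Y i ω), U ω)) (xs, ys, u) *
            (marg p U u) ^ (n - 1) =
          ∏ i, marg p (fun ω => (X i ω, Y i ω, U ω)) (xs i, ys i, u)) :
    maxCorr p U (fun ω i => X i ω) (fun ω i => Y i ω) =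
      ⨆ i : Fin n, maxCorr p U (X i) (Y i) := by
  have hp0 := hp.1
  haveI : Nonempty (Fin n) := Fin.pos_iff_nonempty.1 hn
  have hbddR : BddAbove (Set.range fun i : Fin n => maxCorr p U (X i) (Y i)) :=
    (Set.finite_range _).bddAbove
  have hRi : ∀ i, maxCorr p U (X i) (Y i) ≤ ⨆ j, maxCorr p U (X j) (Y j) :=
    fun i => le_ciSup hbddR i
  have hR0 : 0 ≤ ⨆ j, maxCorr p U (X j) (Y j) :=
    le_trans (maxCorr_nonneg hp0 U _ _) (hRi (Classical.arbitrary _))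
  letI iX : ∀ i, Fintype (Set.range (X i)) := fun i => (Set.finite_range (X i)).fintype
  letI iY : ∀ i, Fintype (Set.range (Y i)) := fun i => (Set.finite_range (Y i)).fintype
  apply le_antisymm
  · -- hard direction
    apply maxCorr_le
    intro f g
    -- subtype-valued variables
    have hRi' : ∀ i, maxCorr p U
        (fun ω => (⟨X i ω, Set.mem_range_self ω⟩ : Set.range (X i)))
        (fun ω => (⟨Y i ω, Set.mem_range_self ω⟩ : Set.range (Y i))) ≤
        ⨆ j, maxCorr p U (X j) (Y j) :=
      fun i => le_trans (maxCorr_range_le hp0 U (X i) (Y i)) (hRi i)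
    have hindep' : ∀ u : 𝒰, 0 < marg p U u →
        ∀ (xs : ∀ i, Set.range (X i)) (ys : ∀ i, Set.range (Y i)),
        marg p (fun ω => ((fun i => (⟨X i ω, Set.mem_range_self ω⟩ : Set.range (X i))),
            (fun i => (⟨Y i ω, Set.mem_range_self ω⟩ : Set.range (Y i))), U ω)) (xs, ys, u) *
            (marg p U u) ^ (n - 1) =
          ∏ i, marg p (fun ω => ((⟨X i ω, Set.mem_range_self ω⟩ : Set.range (X i)),
            (⟨Y i ω, Set.mem_range_self ω⟩ : Set.range (Y i)), U ω)) (xs i, ys i, u) := by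
      intro u hM xs ys
      have e1 : marg p (fun ω => ((fun i => (⟨X i ω, Set.mem_range_self ω⟩ : Set.range (X i))),
          (fun i => (⟨Y i ω, Set.mem_range_self ω⟩ : Set.range (Y i))), U ω)) (xs, ys, u) =
          marg p (fun ω => ((fun i => X i ω), (fun i => Y i ω), U ω))
            ((fun i => (xs i : 𝒳 i)), (fun i => (ys i : 𝒴 i)), u) := by
        refine Finset.sum_congr rfl fun ω _ => ?_
        simp only [Prod.ext_iff, funext_iff, Subtype.ext_iff]
      have e2 : ∀ i : Fin n, marg p (fun ω =>
          ((⟨X i ω, Set.mem_range_self ω⟩ : Set.range (X i)),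
            (⟨Y i ω, Set.mem_range_self ω⟩ : Set.range (Y i)), U ω)) (xs i, ys i, u) =
          marg p (fun ω => (X i ω, Y i ω, U ω)) ((xs i : 𝒳 i), (ys i : 𝒴 i), u) := by
        intro i
        refine Finset.sum_congr rfl fun ω _ => ?_
        simp only [Prod.ext_iff, Subtype.ext_iff]
      rw [e1, Finset.prod_congr rfl fun i _ => e2 i]
      exact hindep u hM _ _
    have key := key_bound hn p hp0
      (fun i ω => (⟨X i ω, Set.mem_range_self ω⟩ : Set.range (X i)))
      (fun i ω => (⟨Y i ω, Set.mem_range_self ω⟩ : Set.range (Y i))) U hR0 hRi' hindep'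
      (fun z => f ((fun i => (z.1 i : 𝒳 i)), z.2)) (fun z => g ((fun i => (z.1 i : 𝒴 i)), z.2))
    unfold ccorr
    split_ifs with hpos
    · have h1 : 0 < cvar p U (fun ω => f ((fun ω i => X i ω) ω, U ω)) := by
        rcases mul_pos_iff.1 hpos with ⟨h1, _⟩ | ⟨h1, _⟩
        · exact h1
        · exact absurd h1 (not_lt.2 (cvar_nonneg_s10 hp0 U _))
      have h2 : 0 < cvar p U (fun ω => g ((fun ω i => Y i ω) ω, U ω)) := by
        rcases mul_pos_iff.1 hpos with ⟨_, h2⟩ | ⟨_, h2⟩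
        · exact h2
        · exact absurd h2 (not_lt.2 (cvar_nonneg_s10 hp0 U _))
      rw [div_le_iff₀ (mul_pos (Real.sqrt_pos.2 h1) (Real.sqrt_pos.2 h2))]
      exact key
    · exact hR0
  · -- easy direction
    refine ciSup_le fun i => ?_
    apply maxCorr_le
    intro f g
    exact ccorr_le_maxCorr hp0 U (fun ω i => X i ω) (fun ω i => Y i ω)
      (fun z => f (z.1 i, z.2)) (fun z => g (z.1 i, z.2))

end GCI
end
end
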